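/- arXiv:1106.5845 — 8 statements merged into one kernel-verified Lean document; each statement's English description precedes it below -/
import Mathlib

section
/- Let G be a finite connected simple graph, let v_r be a vertex of G, let T be a set of vertices of G containing v_r, and let R = { {v_r, u} : u ∈ T \ {v_r} } be the star request set with center v_r and leaf set T \ {v_r}. If D is a dispersal of G satisfying R, then the edge set S = ⋃_{v ∈ V} D_v connects the terminal set T (i.e., any two vertices of T are joined by a walk in G using only edges of S), and |S| ≤ c(D). -/
open SimpleGraph Finset

/-- A dispersal `D` of `G` satisfies a request set `R` if for every request `{u,v} ∈ R`
there is a walk from `u` to `v` all of whose edges lie in `D u ∪ D v`. -/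
def Satisfies {V : Type*} (G : SimpleGraph V) (D : V → Finset (Sym2 V))
    (R : Set (Sym2 V)) : Prop :=
  ∀ u v : V, s(u, v) ∈ R → ∃ p : G.Walk u v, ∀ e ∈ p.edges, e ∈ D u ∨ e ∈ D v

/-- `D` is a dispersal of `G`: every assigned edge is an edge of `G`. -/
def IsDispersal {V : Type*} (G : SimpleGraph V) (D : V → Finset (Sym2 V)) : Prop :=
  ∀ v : V, ∀ e ∈ D v, e ∈ G.edgeSet

/-- The cost of a dispersal. -/
def cost {V : Type*} [Fintype V] (D : V → Finset (Sym2 V)) : ℕ :=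
  ∑ v, (D v).card

/-- An edge set `S` connects a terminal set `T` if any two vertices of `T` are joined by a
walk in `G` using only edges of `S`. -/
def Connects {V : Type*} (G : SimpleGraph V) (S : Finset (Sym2 V)) (T : Finset V) : Prop :=
  ∀ a ∈ T, ∀ b ∈ T, ∃ p : G.Walk a b, ∀ e ∈ p.edges, e ∈ S

/-- The star request set with center `vr` and leaf set `T \ {vr}`. -/
def starR {V : Type*} (vr : V) (T : Finset V) : Set (Sym2 V) :=
  {e | ∃ u ∈ T, u ≠ vr ∧ e = s(vr, u)}

theorem stmt0 {V : Type*} [Fintype V] [DecidableEq V]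
    (G : SimpleGraph V) (hG : G.Connected)
    (vr : V) (T : Finset V) (hvr : vr ∈ T)
    (D : V → Finset (Sym2 V)) (hD : IsDispersal G D)
    (hsat : Satisfies G D (starR vr T)) :
    Connects G (Finset.univ.biUnion D) T ∧
      (Finset.univ.biUnion D).card ≤ cost D := by
  constructor
  · have key : ∀ a ∈ T, ∃ p : G.Walk vr a,
        ∀ e ∈ p.edges, e ∈ Finset.univ.biUnion D := by
      intro a ha
      by_cases h : a = vr
      · subst h; exact ⟨Walk.nil, by simp⟩
      · obtain ⟨p, hp⟩ := hsat vr a ⟨a, ha, h, rfl⟩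
        refine ⟨p, fun e he => ?_⟩
        rcases hp e he with h' | h'
        · exact Finset.mem_biUnion.2 ⟨vr, Finset.mem_univ _, h'⟩
        · exact Finset.mem_biUnion.2 ⟨a, Finset.mem_univ _, h'⟩
    intro a ha b hb
    obtain ⟨p, hp⟩ := key a ha
    obtain ⟨q, hq⟩ := key b hb
    refine ⟨p.reverse.append q, fun e he => ?_⟩
    simp only [Walk.edges_append, Walk.edges_reverse, List.mem_append, List.mem_reverse] at he
    rcases he with h | h
    · exact hp e h
    · exact hq e h
  · exact Finset.card_biUnion_le
end

section
/- Let G be a finite connected simple graph, let T be a nonempty set of vertices of G, let v_r ∈ T, and let R = { {v_r, u} : u ∈ T \ {v_r} } be the corresponding star request set. Then the minimum cost c_min(G, R) of a dispersal of G satisfying R equals the minimum cardinality of an edge set S ⊆ E that connects the terminal set T. -/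
open SimpleGraph Finset

/-- The minimum cost of a dispersal of `G` satisfying `R`. -/
noncomputable def cmin {V : Type*} [Fintype V] (G : SimpleGraph V) (R : Set (Sym2 V)) : ℕ :=
  sInf {c | ∃ D : V → Finset (Sym2 V), IsDispersal G D ∧ Satisfies G D R ∧ cost D = c}

lemma walk_to_center {V : Type*} (G : SimpleGraph V) (D : V → Finset (Sym2 V))
    (T : Finset V) (vr : V) (hsat : Satisfies G D (starR vr T))
    (a : V) (ha : a ∈ T) : ∃ p : G.Walk vr a, ∀ e ∈ p.edges, e ∈ D vr ∨ e ∈ D a := by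
  by_cases h : a = vr
  · subst h; exact ⟨SimpleGraph.Walk.nil, by simp⟩
  · exact hsat vr a ⟨a, ha, h, rfl⟩

theorem stmt2 {V : Type*} [Fintype V] [DecidableEq V]
    (G : SimpleGraph V) (hG : G.Connected)
    (T : Finset V) (hT : T.Nonempty) (vr : V) (hvr : vr ∈ T) :
    cmin G (starR vr T) =
      sInf {k | ∃ S : Finset (Sym2 V), (∀ e ∈ S, e ∈ G.edgeSet) ∧ Connects G S T ∧
        S.card = k} := by
  set A := {c | ∃ D : V → Finset (Sym2 V), IsDispersal G D ∧ Satisfies G D (starR vr T) ∧ cost D = c} with hA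
  set B := {k | ∃ S : Finset (Sym2 V), (∀ e ∈ S, e ∈ G.edgeSet) ∧ Connects G S T ∧ S.card = k} with hB
  -- B is nonempty
  have hBne : B.Nonempty := by
    refine ⟨_, (Set.toFinite G.edgeSet).toFinset, ?_, ?_, rfl⟩
    · intro e he; exact (Set.Finite.mem_toFinset _).mp he
    · intro a _ b _
      obtain ⟨p⟩ := hG a b
      exact ⟨p, fun e he => (Set.Finite.mem_toFinset _).mpr (p.edges_subset_edgeSet he)⟩
  -- any element of B is an element of A
  have hBA : ∀ k ∈ B, k ∈ A := by
    rintro k ⟨S, hSE, hScon, rfl⟩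
    refine ⟨fun v => if v = vr then S else ∅, ?_, ?_, ?_⟩
    · intro v e he
      by_cases h : v = vr
      · simp only [h, if_pos rfl] at he; exact hSE e he
      · simp [h] at he
    · rintro u v ⟨w, hw, hwne, hsym⟩
      rw [Sym2.eq_iff] at hsym
      obtain ⟨rfl, rfl⟩ | ⟨rfl, rfl⟩ := hsym
      · obtain ⟨p, hp⟩ := hScon _ hvr _ hw
        exact ⟨p, fun e he => Or.inl (by simpa using hp e he)⟩
      · obtain ⟨p, hp⟩ := hScon _ hw _ hvr
        exact ⟨p, fun e he => Or.inr (by simpa using hp e he)⟩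
    · simp [cost, apply_ite Finset.card, Finset.sum_ite_eq' Finset.univ vr]
  -- any element of A dominates some element of B
  have hAB : ∀ c ∈ A, ∃ k ∈ B, k ≤ c := by
    rintro c ⟨D, hdisp, hsat, rfl⟩
    refine ⟨(T.biUnion D).card, ⟨T.biUnion D, ?_, ?_, rfl⟩, ?_⟩
    · intro e he
      obtain ⟨v, _, hv⟩ := Finset.mem_biUnion.mp he
      exact hdisp v e hv
    · intro a ha b hb
      obtain ⟨pa, hpa⟩ := walk_to_center G D T vr hsat a ha
      obtain ⟨pb, hpb⟩ := walk_to_center G D T vr hsat b hb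
      refine ⟨pa.reverse.append pb, ?_⟩
      intro e he
      rw [SimpleGraph.Walk.edges_append, List.mem_append, SimpleGraph.Walk.edges_reverse,
        List.mem_reverse] at he
      rcases he with he | he
      · rcases hpa e he with h | h
        · exact Finset.mem_biUnion.mpr ⟨vr, hvr, h⟩
        · exact Finset.mem_biUnion.mpr ⟨a, ha, h⟩
      · rcases hpb e he with h | h
        · exact Finset.mem_biUnion.mpr ⟨vr, hvr, h⟩
        · exact Finset.mem_biUnion.mpr ⟨b, hb, h⟩
    · calc (T.biUnion D).card ≤ ∑ v ∈ T, (D v).card := Finset.card_biUnion_le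
        _ ≤ ∑ v, (D v).card := Finset.sum_le_sum_of_subset (Finset.subset_univ T)
  have hAne : A.Nonempty := ⟨sInf B, hBA _ (Nat.sInf_mem hBne)⟩
  apply le_antisymm
  · exact Nat.sInf_le (hBA _ (Nat.sInf_mem hBne))
  · obtain ⟨k, hk, hkc⟩ := hAB _ (Nat.sInf_mem hAne)
    exact le_trans (Nat.sInf_le hk) hkc
end

section
/- Let G be a finite connected simple graph and let R be a request set on G such that the request graph H_R (whose vertices are the endpoints of requests and whose edges are the requests) is a tree. Then there exists a dispersal D of G satisfying R with cost c(D) = c_min(G, R) that well-satisfies every request in R: for every {u,v} ∈ R there is a vertex α (a connecting point) such that some walk from u to α has all its edges in D_u and some walk from α to v has all its edges in D_v. -/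
open SimpleGraph Finset

/-- `D` well-satisfies the request `{u,v}`: there is a connecting point `α` such that some
walk from `u` to `α` has all its edges in `D u` and some walk from `α` to `v` has all its
edges in `D v`. -/
def WellSat {V : Type*} (G : SimpleGraph V) (D : V → Finset (Sym2 V)) (u v : V) : Prop :=
  ∃ α : V, (∃ p : G.Walk u α, ∀ e ∈ p.edges, e ∈ D u) ∧
    (∃ q : G.Walk α v, ∀ e ∈ q.edges, e ∈ D v)

namespace Stmt8Aux

variable {V : Type*} {G : SimpleGraph V}

/-- Reachability from `x` to `y` using walks all of whose edges lie in `S`. -/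
def Rch (G : SimpleGraph V) (S : Finset (Sym2 V)) (x y : V) : Prop :=
  ∃ p : G.Walk x y, ∀ e ∈ p.edges, e ∈ S

lemma Rch.refl (G : SimpleGraph V) (S : Finset (Sym2 V)) (x : V) : Rch G S x x :=
  ⟨Walk.nil, by simp⟩

lemma Rch.mono {S T : Finset (Sym2 V)} {x y : V} (hST : S ⊆ T) (h : Rch G S x y) :
    Rch G T x y := by
  obtain ⟨p, hp⟩ := h
  exact ⟨p, fun e he => hST (hp e he)⟩

lemma Rch.symm {S : Finset (Sym2 V)} {x y : V} (h : Rch G S x y) : Rch G S y x := by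
  obtain ⟨p, hp⟩ := h
  exact ⟨p.reverse, fun e he => hp e (by simpa [Walk.edges_reverse] using he)⟩

lemma Rch.trans {S : Finset (Sym2 V)} {x y z : V} (h : Rch G S x y) (h' : Rch G S y z) :
    Rch G S x z := by
  obtain ⟨p, hp⟩ := h
  obtain ⟨q, hq⟩ := h'
  refine ⟨p.append q, fun e he => ?_⟩
  rcases (by simpa [Walk.edges_append] using he : e ∈ p.edges ∨ e ∈ q.edges) with h | h
  exacts [hp e h, hq e h]

lemma Rch.step {S : Finset (Sym2 V)} {x z z' : V} (h : Rch G S x z) (hadj : G.Adj z z')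
    (he : s(z, z') ∈ S) : Rch G S x z' := by
  refine h.trans ⟨Walk.cons hadj Walk.nil, fun e hmem => ?_⟩
  simp only [Walk.edges_cons, Walk.edges_nil, List.mem_singleton] at hmem
  simpa [hmem] using he

/-- Removing an edge whose endpoint is not reachable from `d` does not affect
reachability from `d`. -/
lemma Rch.erase_of_not_reach [DecidableEq V] {S : Finset (Sym2 V)} {d z z' y : V}
    (hz : ¬ Rch G S d z) (h : Rch G S d y) :
    Rch G (S.erase s(z, z')) d y := by
  classical
  obtain ⟨p, hp⟩ := h
  refine ⟨p, fun e he => Finset.mem_erase.2 ⟨?_, hp e he⟩⟩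
  rintro rfl
  have hzs : z ∈ p.support := p.fst_mem_support_of_mem_edges he
  exact hz ⟨p.takeUntil z hzs, fun e' he' => hp e' (p.edges_takeUntil_subset hzs he')⟩

/-- Along a walk from a reachable vertex to an unreachable one, there is a boundary edge. -/
lemma exists_boundary {S : Finset (Sym2 V)} {r : V} {a d : V} (p : G.Walk a d) :
    Rch G S r a → ¬ Rch G S r d →
    ∃ z z', ∃ _ : G.Adj z z', s(z, z') ∈ p.edges ∧ Rch G S r z ∧ ¬ Rch G S r z' := by
  induction p with
  | nil => exact fun ha hd => absurd ha hd
  | @cons u v w h q ih =>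
    intro ha hd
    by_cases hv : Rch G S r v
    · obtain ⟨z, z', h1, h2, h3, h4⟩ := ih hv hd
      exact ⟨z, z', h1, by simp [Walk.edges_cons, h2], h3, h4⟩
    · exact ⟨u, v, h, by simp [Walk.edges_cons], ha, hv⟩

open scoped Classical in
/-- The steal loop: grow the recipient `r`'s set from the donor `d`'s set until their
reachability regions meet. -/
lemma inner [Fintype V] [DecidableEq V] (r d : V) :
    ∀ (N : ℕ) (Dr Dd : Finset (Sym2 V)),
    (↑Dr : Set (Sym2 V)) ⊆ G.edgeSet →
    (∃ p : G.Walk r d, ∀ e ∈ p.edges, e ∈ Dr ∨ e ∈ Dd) →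
    ((univ : Finset V).filter (fun y => ¬ Rch G Dr r y)).card ≤ N →
    ∃ Dr' Dd' : Finset (Sym2 V),
      Dr ⊆ Dr' ∧ Dd' ⊆ Dd ∧ (↑Dr' : Set (Sym2 V)) ⊆ G.edgeSet ∧
      Dr'.card + Dd'.card = Dr.card + Dd.card ∧
      (∀ y, Rch G Dd d y → Rch G Dd' d y) ∧
      ∃ β, Rch G Dr' r β ∧ Rch G Dd' d β := by
  classical
  intro N
  induction N with
  | zero =>
    intro Dr Dd hDrE hsat hmeas
    by_cases hβ : ∃ β, Rch G Dr r β ∧ Rch G Dd d β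
    · exact ⟨Dr, Dd, Finset.Subset.refl _, Finset.Subset.refl _, hDrE, rfl,
        fun y h => h, hβ⟩
    · exfalso
      obtain ⟨p, hp⟩ := hsat
      have hd : ¬ Rch G Dr r d := fun h => hβ ⟨d, h, Rch.refl G Dd d⟩
      obtain ⟨z, z', hadj, hep, hz, hz'⟩ := exists_boundary p (Rch.refl G Dr r) hd
      have : z' ∈ (univ : Finset V).filter (fun y => ¬ Rch G Dr r y) :=
        Finset.mem_filter.2 ⟨Finset.mem_univ _, hz'⟩
      have := Finset.card_pos.2 ⟨z', this⟩
      omega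
  | succ N ih =>
    intro Dr Dd hDrE hsat hmeas
    by_cases hβ : ∃ β, Rch G Dr r β ∧ Rch G Dd d β
    · exact ⟨Dr, Dd, Finset.Subset.refl _, Finset.Subset.refl _, hDrE, rfl,
        fun y h => h, hβ⟩
    · obtain ⟨p, hp⟩ := hsat
      have hd : ¬ Rch G Dr r d := fun h => hβ ⟨d, h, Rch.refl G Dd d⟩
      obtain ⟨z, z', hadj, hep, hz, hz'⟩ := exists_boundary p (Rch.refl G Dr r) hd
      have heDr : s(z, z') ∉ Dr := fun h => hz' (hz.step hadj h)
      have heDd : s(z, z') ∈ Dd := (hp _ hep).resolve_left heDr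
      have hdz : ¬ Rch G Dd d z := fun h => hβ ⟨z, hz, h⟩
      set e : Sym2 V := s(z, z') with he_def
      set Dr₁ : Finset (Sym2 V) := insert e Dr with hDr₁
      set Dd₁ : Finset (Sym2 V) := Dd.erase e with hDd₁
      have hmono₁ : Dr ⊆ Dr₁ := Finset.subset_insert _ _
      have hz'new : Rch G Dr₁ r z' :=
        (hz.mono hmono₁).step hadj (Finset.mem_insert_self _ _)
      have hfsub : (univ : Finset V).filter (fun y => ¬ Rch G Dr₁ r y) ⊆
          (univ : Finset V).filter (fun y => ¬ Rch G Dr r y) := by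
        intro y hy
        rw [Finset.mem_filter] at hy ⊢
        exact ⟨hy.1, fun h => hy.2 (h.mono hmono₁)⟩
      have hss : (univ : Finset V).filter (fun y => ¬ Rch G Dr₁ r y) ⊂
          (univ : Finset V).filter (fun y => ¬ Rch G Dr r y) :=
        (Finset.ssubset_iff_of_subset hfsub).2
          ⟨z', Finset.mem_filter.2 ⟨Finset.mem_univ _, hz'⟩,
            fun hmem => (Finset.mem_filter.1 hmem).2 hz'new⟩
      have hmeas₁ : ((univ : Finset V).filter (fun y => ¬ Rch G Dr₁ r y)).card ≤ N := by
        have := Finset.card_lt_card hss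
        omega
      have hDrE₁ : (↑Dr₁ : Set (Sym2 V)) ⊆ G.edgeSet := by
        intro e' he'
        rcases Finset.mem_insert.1 he' with h | h
        · rw [h, he_def]; exact hadj
        · exact hDrE h
      have hsat₁ : ∃ p : G.Walk r d, ∀ e' ∈ p.edges, e' ∈ Dr₁ ∨ e' ∈ Dd₁ := by
        refine ⟨p, fun e' he' => ?_⟩
        by_cases h' : e' = e
        · exact Or.inl (h' ▸ Finset.mem_insert_self _ _)
        · rcases hp e' he' with h | h
          · exact Or.inl (Finset.mem_insert_of_mem h)
          · exact Or.inr (Finset.mem_erase.2 ⟨h', h⟩)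
      obtain ⟨Dr', Dd', h1, h2, h3, h4, h5, h6⟩ := ih Dr₁ Dd₁ hDrE₁ hsat₁ hmeas₁
      refine ⟨Dr', Dd', hmono₁.trans h1, h2.trans (Finset.erase_subset _ _), h3, ?_, ?_, h6⟩
      · have hc1 : Dr₁.card = Dr.card + 1 := Finset.card_insert_of_notMem heDr
        have hc2 : Dd₁.card + 1 = Dd.card := Finset.card_erase_add_one heDd
        omega
      · intro y hy
        exact h5 y (Rch.erase_of_not_reach hdz hy)

lemma isAcyclic_anti {G₁ G₂ : SimpleGraph V} (h : G₁ ≤ G₂) (hac : G₂.IsAcyclic) :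
    G₁.IsAcyclic := fun _v c hc => hac (c.mapLe h) (hc.mapLe h)

/-- A nonempty finite acyclic set of (non-diagonal) edges has a "leaf edge": an edge
one of whose endpoints lies in no other edge. -/
lemma exists_leaf_edge [Fintype V] (R' : Finset (Sym2 V)) (hne : R'.Nonempty)
    (hnd : ∀ e ∈ R', ¬ e.IsDiag)
    (hac : (fromEdgeSet (↑R' : Set (Sym2 V))).IsAcyclic) :
    ∃ d r : V, s(d, r) ∈ R' ∧ d ≠ r ∧ ∀ e ∈ R', e ≠ s(d, r) → d ∉ e := by
  classical
  set H : SimpleGraph V := fromEdgeSet (↑R' : Set (Sym2 V)) with hH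
  obtain ⟨e₀, he₀⟩ := hne
  induction e₀ using Sym2.ind with
  | _ a b =>
    have hab : a ≠ b := fun h => hnd _ he₀ (Sym2.mk_isDiag_iff.2 h)
    have hAdj : H.Adj a b := by
      rw [hH, fromEdgeSet_adj _]
      exact ⟨by exact_mod_cast he₀, hab⟩
    set P : ℕ → Prop := fun n => ∃ (u v : V) (p : H.Walk u v), p.IsPath ∧ p.length = n
      with hP
    have hP1 : P 1 := by
      refine ⟨a, b, Walk.cons hAdj Walk.nil, ?_, rfl⟩
      rw [Walk.cons_isPath_iff]
      exact ⟨Walk.IsPath.nil, by simpa using hab⟩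
    have hbound : ∀ n, P n → n < Fintype.card V := by
      rintro n ⟨u, v, p, hp, rfl⟩
      exact hp.length_lt
    set L : Finset ℕ := (Finset.range (Fintype.card V)).filter P with hL
    have hL1 : 1 ∈ L := Finset.mem_filter.2 ⟨Finset.mem_range.2 (hbound 1 hP1), hP1⟩
    have hLne : L.Nonempty := ⟨1, hL1⟩
    set N : ℕ := L.max' hLne with hN
    have hPN : P N := (Finset.mem_filter.1 (L.max'_mem hLne)).2
    have hmax : ∀ n, P n → n ≤ N := fun n hn =>
      L.le_max' n (Finset.mem_filter.2 ⟨Finset.mem_range.2 (hbound n hn), hn⟩)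
    have hN1 : 1 ≤ N := L.le_max' 1 hL1
    obtain ⟨u, v, p, hp, hlen⟩ := hPN
    cases p with
    | nil => simp at hlen; omega
    | @cons u w v hadj q =>
      have huw : H.Adj u w := hadj
      have hmemuw : s(u, w) ∈ R' := by
        have := ((fromEdgeSet_adj _).1 (hH ▸ huw)).1
        exact_mod_cast this
      have hneuw : u ≠ w := huw.ne
      refine ⟨u, w, hmemuw, hneuw, ?_⟩
      intro e he hediff hmem
      obtain ⟨x, rfl⟩ := Sym2.mem_iff_exists.1 hmem
      have hux : u ≠ x := fun h => hnd _ he (Sym2.mk_isDiag_iff.2 h)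
      have hxw : x ≠ w := fun h => hediff (by rw [h])
      have hAdjux : H.Adj u x := by
        rw [hH, fromEdgeSet_adj _]
        exact ⟨by exact_mod_cast he, hux⟩
      have hpfull : (Walk.cons hadj q).IsPath := hp
      have hkey : s(u, x) ∉ (Walk.cons hadj q).edges := by
        rw [Walk.edges_cons]
        intro hmem'
        rcases List.mem_cons.1 hmem' with h | h
        · rcases Sym2.eq_iff.1 h with ⟨-, h2⟩ | ⟨h1, -⟩
          · exact hxw h2
          · exact hneuw h1
        · have : u ∈ q.support := q.fst_mem_support_of_mem_edges h
          exact ((Walk.cons_isPath_iff hadj q).1 hp).2 this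
      by_cases hxs : x ∈ (Walk.cons hadj q).support
      · exfalso
        set q₀ : H.Walk u x := (Walk.cons hadj q).takeUntil x hxs with hq₀
        have hq₀path : q₀.IsPath := hp.takeUntil hxs
        have hq₀edges : s(u, x) ∉ q₀.reverse.edges := by
          rw [Walk.edges_reverse]
          intro hmem'
          exact hkey ((Walk.cons hadj q).edges_takeUntil_subset hxs
            (List.mem_reverse.1 hmem'))
        have hcyc : (Walk.cons hAdjux q₀.reverse).IsCycle :=
          (Walk.cons_isCycle_iff q₀.reverse hAdjux).2 ⟨hq₀path.reverse, hq₀edges⟩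
        exact hac _ hcyc
      · exfalso
        have hext : (Walk.cons hAdjux.symm (Walk.cons hadj q)).IsPath := by
          rw [Walk.cons_isPath_iff]
          exact ⟨hp, hxs⟩
        have : P (N + 1) := ⟨x, v, _, hext, by simp [Walk.length_cons, hlen]⟩
        have := hmax _ this
        omega

lemma cost_update₂ {V : Type*} [Fintype V] [DecidableEq V] (D : V → Finset (Sym2 V))
    {r d : V} (hrd : r ≠ d) (A B : Finset (Sym2 V))
    (hcard : A.card + B.card = (D r).card + (D d).card) :
    cost (Function.update (Function.update D r A) d B) = cost D := by
  classical
  have key : ∀ (f : V → Finset (Sym2 V)) (a : V) (C : Finset (Sym2 V)),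
      (fun x => ((Function.update f a C) x).card) =
        Function.update (fun x => (f x).card) a C.card := by
    intro f a C
    funext x
    by_cases h : x = a
    · subst h; simp
    · rw [Function.update_of_ne h, Function.update_of_ne h]
  have hrmem : r ∈ (univ : Finset V) \ {d} := by
    simp [Finset.mem_sdiff, hrd]
  unfold cost
  rw [show (fun x => ((Function.update (Function.update D r A) d B) x).card) =
      Function.update (fun x => ((Function.update D r A) x).card) d B.card from
      key _ _ _]
  rw [Finset.sum_update_of_mem (Finset.mem_univ d)]
  rw [show (fun x => ((Function.update D r A) x).card) =
      Function.update (fun x => ((D x)).card) r A.card from key _ _ _]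
  rw [Finset.sum_update_of_mem hrmem]
  have h1 : ∑ x, (D x).card = ∑ x ∈ (univ : Finset V) \ {d}, (D x).card + (D d).card :=
    Finset.sum_eq_sum_sdiff_singleton_add (Finset.mem_univ d) _
  have h2 : ∑ x ∈ (univ : Finset V) \ {d}, (D x).card =
      ∑ x ∈ ((univ : Finset V) \ {d}) \ {r}, (D x).card + (D r).card :=
    Finset.sum_eq_sum_sdiff_singleton_add hrmem _
  omega

open scoped Classical in
/-- Process the requests, leaf edge first: produce a dispersal of the same cost in which
every request has a connecting point, without shrinking any vertex's own reachability
region. -/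
lemma outer [Fintype V] (G : SimpleGraph V) (R : Set (Sym2 V))
    (hdiag : ∀ e ∈ R, ¬ e.IsDiag) (hacyc : (fromEdgeSet R).IsAcyclic) :
    ∀ (n : ℕ) (R' : Finset (Sym2 V)), R'.card ≤ n → (↑R' : Set (Sym2 V)) ⊆ R →
    ∀ D : V → Finset (Sym2 V), IsDispersal G D →
    (∀ u v : V, s(u, v) ∈ R' → ∃ p : G.Walk u v, ∀ e ∈ p.edges, e ∈ D u ∨ e ∈ D v) →
    ∃ D' : V → Finset (Sym2 V), IsDispersal G D' ∧ cost D' = cost D ∧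
      (∀ x y, Rch G (D x) x y → Rch G (D' x) x y) ∧
      (∀ u v : V, s(u, v) ∈ R' → ∃ β, Rch G (D' u) u β ∧ Rch G (D' v) v β) := by
  classical
  intro n
  induction n with
  | zero =>
    intro R' hcard hsub D hdisp _hsat
    have hR' : R' = ∅ := Finset.card_eq_zero.1 (le_antisymm hcard (Nat.zero_le _))
    subst hR'
    exact ⟨D, hdisp, rfl, fun _x _y h => h, fun u v hm => absurd hm (by simp)⟩
  | succ n ih =>
    intro R' hcard hsub D hdisp hsat
    rcases R'.eq_empty_or_nonempty with hR' | hne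
    · subst hR'
      exact ⟨D, hdisp, rfl, fun _x _y h => h, fun u v hm => absurd hm (by simp)⟩
    · have hnd : ∀ e ∈ R', ¬ e.IsDiag := fun e he => hdiag e (hsub he)
      have hac' : (fromEdgeSet (↑R' : Set (Sym2 V))).IsAcyclic :=
        isAcyclic_anti (fromEdgeSet_mono hsub) hacyc
      obtain ⟨d, r, hmem, hdr, hfresh⟩ := exists_leaf_edge R' hne hnd hac'
      have hmem' : s(r, d) ∈ R' := by rw [Sym2.eq_swap]; exact hmem
      obtain ⟨p, hp⟩ := hsat r d hmem'
      obtain ⟨Dr', Dd', hsub1, hsub2, hDrE, hcards, hdonor, β, hβr, hβd⟩ :=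
        inner (G := G) r d _ (D r) (D d) (fun e he => hdisp r e he) ⟨p, hp⟩ le_rfl
      set D₁ : V → Finset (Sym2 V) := Function.update (Function.update D r Dr') d Dd'
        with hD₁
      have hrd : r ≠ d := Ne.symm hdr
      have hD₁r : D₁ r = Dr' := by
        rw [hD₁, Function.update_of_ne hrd, Function.update_self]
      have hD₁d : D₁ d = Dd' := by rw [hD₁, Function.update_self]
      have hD₁x : ∀ x, x ≠ r → x ≠ d → D₁ x = D x := fun x h1 h2 => by
        rw [hD₁, Function.update_of_ne h2, Function.update_of_ne h1]
      have hD₁mono : ∀ x, x ≠ d → D x ⊆ D₁ x := by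
        intro x hxd
        by_cases hxr : x = r
        · subst hxr; rw [hD₁r]; exact hsub1
        · rw [hD₁x x hxr hxd]
      have hdisp₁ : IsDispersal G D₁ := by
        intro x e he
        by_cases hxd : x = d
        · subst hxd; rw [hD₁d] at he; exact hdisp x e (hsub2 he)
        · by_cases hxr : x = r
          · subst hxr; rw [hD₁r] at he; exact hDrE he
          · rw [hD₁x x hxr hxd] at he; exact hdisp x e he
      have hcost₁ : cost D₁ = cost D := cost_update₂ D hrd Dr' Dd' hcards
      have hsat₁ : ∀ u v : V, s(u, v) ∈ R'.erase s(d, r) →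
          ∃ q : G.Walk u v, ∀ e ∈ q.edges, e ∈ D₁ u ∨ e ∈ D₁ v := by
        intro u v hm
        have h1 : s(u, v) ∈ R' := Finset.mem_of_mem_erase hm
        have h2 : s(u, v) ≠ s(d, r) := (Finset.mem_erase.1 hm).1
        have h3 : d ∉ s(u, v) := hfresh _ h1 h2
        have hud : u ≠ d := fun h => h3 (Sym2.mem_iff.2 (Or.inl h.symm))
        have hvd : v ≠ d := fun h => h3 (Sym2.mem_iff.2 (Or.inr h.symm))
        obtain ⟨q, hq⟩ := hsat u v h1
        exact ⟨q, fun e he => (hq e he).imp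
          (fun h => hD₁mono u hud h) (fun h => hD₁mono v hvd h)⟩
      obtain ⟨D', hdisp', hcost', hmono', hcert'⟩ :=
        ih (R'.erase s(d, r))
          (by have := Finset.card_erase_of_mem hmem; omega)
          (fun e he => hsub (Finset.mem_of_mem_erase he)) D₁ hdisp₁ hsat₁
      have hmono₁ : ∀ x y, Rch G (D x) x y → Rch G (D₁ x) x y := by
        intro x y h
        by_cases hxd : x = d
        · subst hxd
          rw [hD₁d]
          exact hdonor y h
        · exact h.mono (hD₁mono x hxd)
      refine ⟨D', hdisp', by rw [hcost', hcost₁], fun x y h => hmono' x y (hmono₁ x y h), ?_⟩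
      intro u v hm
      by_cases he : s(u, v) = s(d, r)
      · have hβr' : Rch G (D' r) r β := hmono' r β (by rw [hD₁r]; exact hβr)
        have hβd' : Rch G (D' d) d β := hmono' d β (by rw [hD₁d]; exact hβd)
        rcases Sym2.eq_iff.1 he with ⟨h1, h2⟩ | ⟨h1, h2⟩
        · subst h1; subst h2; exact ⟨β, hβd', hβr'⟩
        · subst h1; subst h2; exact ⟨β, hβr', hβd'⟩
      · exact hcert' u v (Finset.mem_erase.2 ⟨he, hm⟩)

end Stmt8Aux

theorem stmt8 {V : Type*} [Fintype V] (G : SimpleGraph V) (hG : G.Connected)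
    (R : Set (Sym2 V)) (hdiag : ∀ e ∈ R, ¬ e.IsDiag)
    (hacyc : (SimpleGraph.fromEdgeSet R).IsAcyclic)
    (htree : ∀ a ∈ (SimpleGraph.fromEdgeSet R).support,
      ∀ b ∈ (SimpleGraph.fromEdgeSet R).support, (SimpleGraph.fromEdgeSet R).Reachable a b) :
    ∃ D : V → Finset (Sym2 V), IsDispersal G D ∧ Satisfies G D R ∧
      cost D = cmin G R ∧ ∀ u v : V, s(u, v) ∈ R → WellSat G D u v := by
  classical
  have hSne : {c | ∃ D : V → Finset (Sym2 V),
      IsDispersal G D ∧ Satisfies G D R ∧ cost D = c}.Nonempty := by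
    refine ⟨cost (fun _ => G.edgeFinset), fun _ => G.edgeFinset, ?_, ?_, rfl⟩
    · intro v e he
      exact mem_edgeFinset.1 he
    · intro u v _hmem
      obtain ⟨p⟩ := hG.preconnected u v
      exact ⟨p, fun e he => Or.inl (mem_edgeFinset.2 (p.edges_subset_edgeSet he))⟩
  obtain ⟨D₀, hdisp₀, hsat₀, hcost₀⟩ := Nat.sInf_mem hSne
  set Rf : Finset (Sym2 V) := (Set.toFinite R).toFinset with hRf
  have hRfmem : ∀ e, e ∈ Rf ↔ e ∈ R := fun e => Set.Finite.mem_toFinset _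
  have hRfsub : (↑Rf : Set (Sym2 V)) ⊆ R := fun e he => (hRfmem e).1 he
  obtain ⟨D', hdisp', hcost', _hmono', hcert'⟩ :=
    Stmt8Aux.outer G R hdiag hacyc Rf.card Rf le_rfl hRfsub D₀ hdisp₀
      (fun u v h => hsat₀ u v ((hRfmem _).1 h))
  refine ⟨D', hdisp', ?_, ?_, ?_⟩
  · intro u v hmem
    obtain ⟨β, h1, h2⟩ := hcert' u v ((hRfmem _).2 hmem)
    obtain ⟨p, hp⟩ := h1
    obtain ⟨q, hq⟩ := h2.symm
    refine ⟨p.append q, fun e he => ?_⟩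
    rcases (by simpa [SimpleGraph.Walk.edges_append] using he :
        e ∈ p.edges ∨ e ∈ q.edges) with h | h
    · exact Or.inl (hp e h)
    · exact Or.inr (hq e h)
  · rw [hcost']
    exact hcost₀
  · intro u v hmem
    obtain ⟨β, h1, h2⟩ := hcert' u v ((hRfmem _).2 hmem)
    obtain ⟨p, hp⟩ := h1
    obtain ⟨q, hq⟩ := h2.symm
    exact ⟨β, ⟨p, hp⟩, ⟨q, hq⟩⟩
end

section
/- Let G be a finite connected simple graph, let R be a request set on G, let D be a dispersal satisfying R, and let {u,v} ∈ R be a request that is not well-satisfied by D but such that every other request in R having u as an endpoint is well-satisfied by D. Then there exists a dispersal D' satisfying R with c(D') = c(D) such that every request well-satisfied by D is well-satisfied by D' and, in addition, the request {u,v} is well-satisfied by D'. -/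
open SimpleGraph Finset

/-- Every vertex on a `Du`-walk starting at a `Du`-reachable vertex is `Du`-reachable. -/
lemma aux_reach {V : Type*} {G : SimpleGraph V} {Du : Finset (Sym2 V)} {u : V} :
    ∀ {w x : V} (t : G.Walk w x), (∀ e ∈ t.edges, e ∈ Du) →
      (∃ r : G.Walk u w, ∀ e ∈ r.edges, e ∈ Du) →
      ∀ y ∈ t.support, ∃ r : G.Walk u y, ∀ e ∈ r.edges, e ∈ Du := by
  intro w x t
  induction t with
  | nil =>
      intro _ hw y hy
      rw [Walk.support_nil, List.mem_singleton] at hy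
      subst hy; exact hw
  | @cons w w' x h t ih =>
      intro he hw y hy
      rw [Walk.support_cons, List.mem_cons] at hy
      have hedge : s(w, w') ∈ Du := he _ (by rw [Walk.edges_cons]; exact List.mem_cons_self)
      have het : ∀ e ∈ t.edges, e ∈ Du := fun e h' =>
        he e (by rw [Walk.edges_cons]; exact List.mem_cons_of_mem _ h')
      rcases hy with rfl | hy
      · exact hw
      · refine ih het ?_ y hy
        obtain ⟨r, hr⟩ := hw
        refine ⟨r.concat h, ?_⟩
        intro e heq
        rw [Walk.edges_concat, List.concat_eq_append, List.mem_append, List.mem_singleton] at heq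
        rcases heq with h1 | rfl
        · exact hr e h1
        · exact hedge

/-- Key structural lemma: along a walk with edges in `Du ∪ Dv`, either every `Du`-edge not
in `Dv` has no `Du`-reachable endpoint, or there is a suffix starting at a reachable vertex
with that property. -/
lemma auxL' {V : Type*} {G : SimpleGraph V} {Du Dv : Finset (Sym2 V)} {u : V} :
    ∀ {w v : V} (t : G.Walk w v), (∀ e ∈ t.edges, e ∈ Du ∨ e ∈ Dv) →
      (∀ e ∈ t.edges, e ∈ Dv ∨ (e ∈ Du ∧ ∀ y ∈ e,
          ¬ ∃ r : G.Walk u y, ∀ e' ∈ r.edges, e' ∈ Du)) ∨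
      ∃ x, (∃ r : G.Walk u x, ∀ e ∈ r.edges, e ∈ Du) ∧ ∃ q : G.Walk x v,
        (∀ e ∈ q.edges, e ∈ Du ∨ e ∈ Dv) ∧
        (∀ e ∈ q.edges, e ∈ Dv ∨ (e ∈ Du ∧ ∀ y ∈ e,
          ¬ ∃ r : G.Walk u y, ∀ e' ∈ r.edges, e' ∈ Du)) := by
  intro w v t
  induction t with
  | nil => intro _; left; intro e he; rw [Walk.edges_nil] at he; exact absurd he List.not_mem_nil
  | @cons w w' v h t ih =>
      intro he
      have het : ∀ e ∈ t.edges, e ∈ Du ∨ e ∈ Dv := fun e h' =>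
        he e (by rw [Walk.edges_cons]; exact List.mem_cons_of_mem _ h')
      have hfst : s(w, w') ∈ (Walk.cons h t).edges := by
        rw [Walk.edges_cons]; exact List.mem_cons_self
      rcases ih het with hC | hR
      · by_cases hc : s(w, w') ∈ Dv ∨ (s(w, w') ∈ Du ∧ ∀ y ∈ s(w, w'),
            ¬ ∃ r : G.Walk u y, ∀ e' ∈ r.edges, e' ∈ Du)
        · left
          intro e hme
          rw [Walk.edges_cons, List.mem_cons] at hme
          rcases hme with rfl | hme
          · exact hc
          · exact hC e hme
        · right
          push_neg at hc
          obtain ⟨hnv, hdu⟩ := hc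
          have hDu : s(w, w') ∈ Du := (he _ hfst).resolve_right hnv
          obtain ⟨y, hy, r, hr⟩ := hdu hDu
          have hw' : ∃ r : G.Walk u w', ∀ e ∈ r.edges, e ∈ Du := by
            rw [Sym2.mem_iff] at hy
            rcases hy with rfl | rfl
            · refine ⟨r.concat h, ?_⟩
              intro e heq
              rw [Walk.edges_concat, List.concat_eq_append, List.mem_append, List.mem_singleton] at heq
              rcases heq with h1 | rfl
              · exact hr e h1
              · exact hDu
            · exact ⟨r, hr⟩
          exact ⟨w', hw', t, het, hC⟩
      · right; exact hR

theorem stmt9 {V : Type*} [Fintype V] (G : SimpleGraph V) (hG : G.Connected)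
    (R : Set (Sym2 V)) (D : V → Finset (Sym2 V))
    (hD : IsDispersal G D) (hsat : Satisfies G D R)
    (u v : V) (huv : s(u, v) ∈ R) (hnws : ¬ WellSat G D u v)
    (hothers : ∀ w : V, s(u, w) ∈ R → s(u, w) ≠ s(u, v) → WellSat G D u w) :
    ∃ D' : V → Finset (Sym2 V), IsDispersal G D' ∧ Satisfies G D' R ∧
      cost D' = cost D ∧
      (∀ a b : V, s(a, b) ∈ R → WellSat G D a b → WellSat G D' a b) ∧
      WellSat G D' u v := by
  classical
  have hne : u ≠ v := by
    rintro rfl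
    exact hnws ⟨u, ⟨Walk.nil, by simp⟩, ⟨Walk.nil, by simp⟩⟩
  obtain ⟨p, hp⟩ := hsat u v huv
  obtain ⟨x, hx, q, hq1, hq2⟩ :
      ∃ x, (∃ r : G.Walk u x, ∀ e ∈ r.edges, e ∈ D u) ∧ ∃ q : G.Walk x v,
        (∀ e ∈ q.edges, e ∈ D u ∨ e ∈ D v) ∧
        (∀ e ∈ q.edges, e ∈ D v ∨ (e ∈ D u ∧ ∀ y ∈ e,
          ¬ ∃ r : G.Walk u y, ∀ e' ∈ r.edges, e' ∈ D u)) := by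
    rcases auxL' p hp with hC | hR
    · exact ⟨u, ⟨Walk.nil, by simp⟩, p, hp, hC⟩
    · exact hR
  set S : Finset (Sym2 V) := (q.edges.toFinset ∩ D u) \ D v with hSdef
  have hSu : S ⊆ D u := fun e he => (Finset.mem_inter.mp (Finset.mem_sdiff.mp he).1).2
  have hSv : ∀ e ∈ S, e ∉ D v := fun e he => (Finset.mem_sdiff.mp he).2
  have hSbad : ∀ e ∈ S, ∀ y ∈ e, ¬ ∃ r : G.Walk u y, ∀ e' ∈ r.edges, e' ∈ D u := by
    intro e he
    have h1 := Finset.mem_sdiff.mp he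
    have h2 := Finset.mem_inter.mp h1.1
    rcases hq2 e (List.mem_toFinset.mp h2.1) with hv | ⟨_, hbad⟩
    · exact absurd hv h1.2
    · exact hbad
  set D' : V → Finset (Sym2 V) :=
    fun w => if w = u then D u \ S else if w = v then D v ∪ S else D w with hD'def
  have hD'u : D' u = D u \ S := by simp [hD'def]
  have hD'v : D' v = D v ∪ S := by simp [hD'def, hne.symm]
  have hD'w : ∀ w, w ≠ u → w ≠ v → D' w = D w := by
    intro w h1 h2; simp [hD'def, h1, h2]
  have hmono : ∀ w, w ≠ u → D w ⊆ D' w := by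
    intro w hw
    by_cases h2 : w = v
    · subst h2; rw [hD'v]; exact Finset.subset_union_left
    · rw [hD'w w hw h2]
  have hH2 : ∀ {α : V} (r : G.Walk u α), (∀ e ∈ r.edges, e ∈ D u) →
      ∀ e ∈ r.edges, e ∈ D' u := by
    intro α r hr e
    induction e using Sym2.ind with
    | _ a b =>
      intro he
      rw [hD'u, Finset.mem_sdiff]
      refine ⟨hr _ he, fun heS => ?_⟩
      have ha : a ∈ r.support := Walk.fst_mem_support_of_mem_edges r he
      have hreach : ∃ r' : G.Walk u a, ∀ e' ∈ r'.edges, e' ∈ D u :=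
        aux_reach r hr ⟨Walk.nil, by simp⟩ a ha
      exact hSbad _ heS a (Sym2.mem_mk_left a b) hreach
  have hH2' : ∀ {α : V} (r : G.Walk α u), (∀ e ∈ r.edges, e ∈ D u) →
      ∀ e ∈ r.edges, e ∈ D' u := by
    intro α r hr e he
    refine hH2 r.reverse (fun e' he' => hr e' ?_) e ?_
    · rwa [Walk.edges_reverse, List.mem_reverse] at he'
    · rwa [Walk.edges_reverse, List.mem_reverse]
  have hmix : ∀ e, (e ∈ D u ∨ e ∈ D v) → (e ∈ D' u ∨ e ∈ D' v) := by
    intro e he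
    by_cases heS : e ∈ S
    · right; rw [hD'v]; exact Finset.mem_union_right _ heS
    · rcases he with h1 | h2
      · left; rw [hD'u, Finset.mem_sdiff]; exact ⟨h1, heS⟩
      · right; rw [hD'v]; exact Finset.mem_union_left _ h2
  refine ⟨D', ?_, ?_, ?_, ?_, ?_⟩
  · -- IsDispersal
    intro w e he
    by_cases h1 : w = u
    · rw [h1, hD'u, Finset.mem_sdiff] at he; exact hD u e he.1
    · by_cases h2 : w = v
      · rw [h2, hD'v, Finset.mem_union] at he
        rcases he with h3 | h3
        · exact hD v e h3
        · exact hD u e (hSu h3)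
      · rw [hD'w w h1 h2] at he; exact hD w e he
  · -- Satisfies
    intro a b hab
    by_cases hau : a = u
    · subst hau
      by_cases hbu : b = a
      · subst hbu; exact ⟨Walk.nil, by simp⟩
      · by_cases hbv : b = v
        · subst hbv
          obtain ⟨p0, hp0⟩ := hsat a b hab
          exact ⟨p0, fun e he => hmix e (hp0 e he)⟩
        · have hne2 : s(a, b) ≠ s(a, v) := by
            intro hEq
            rw [Sym2.eq_iff] at hEq
            rcases hEq with ⟨_, h3⟩ | ⟨h3, h4⟩
            · exact hbv h3
            · exact hne h3
          obtain ⟨α, ⟨r, hr⟩, ⟨t, ht⟩⟩ := hothers b hab hne2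
          refine ⟨r.append t, fun e he => ?_⟩
          rw [Walk.edges_append, List.mem_append] at he
          rcases he with h1 | h2
          · exact Or.inl (hH2 r hr e h1)
          · exact Or.inr (hmono b hbu (ht e h2))
    · by_cases hbu : b = u
      · subst hbu
        by_cases hav : a = v
        · subst hav
          obtain ⟨p0, hp0⟩ := hsat a b hab
          exact ⟨p0, fun e he => (hmix e (hp0 e he).symm).symm⟩
        · have hab' : s(b, a) ∈ R := by rwa [Sym2.eq_swap]
          have hne2 : s(b, a) ≠ s(b, v) := by
            intro hEq
            rw [Sym2.eq_iff] at hEq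
            rcases hEq with ⟨_, h3⟩ | ⟨h3, h4⟩
            · exact hav h3
            · exact hne h3
          obtain ⟨α, ⟨r, hr⟩, ⟨t, ht⟩⟩ := hothers a hab' hne2
          refine ⟨(r.append t).reverse, fun e he => ?_⟩
          rw [Walk.edges_reverse, List.mem_reverse, Walk.edges_append, List.mem_append] at he
          rcases he with h1 | h2
          · exact Or.inr (hH2 r hr e h1)
          · exact Or.inl (hmono a hau (ht e h2))
      · obtain ⟨p0, hp0⟩ := hsat a b hab
        exact ⟨p0, fun e he => (hp0 e he).imp (fun h => hmono a hau h) (fun h => hmono b hbu h)⟩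
  · -- cost
    have key : ∀ w, (D' w).card + (if w = u then S.card else 0)
        = (D w).card + (if w = v then S.card else 0) := by
      intro w
      by_cases h1 : w = u
      · subst h1
        rw [hD'u, if_pos rfl, if_neg hne, Finset.card_sdiff_add_card_eq_card hSu]
        omega
      · by_cases h2 : w = v
        · subst h2
          rw [hD'v, if_neg h1, if_pos rfl,
            Finset.card_union_of_disjoint (Finset.disjoint_left.mpr fun e he h' => hSv e h' he)]
          omega
        · rw [hD'w w h1 h2, if_neg h1, if_neg h2]
    have hsum := Finset.sum_congr rfl (fun w (_ : w ∈ Finset.univ) => key w)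
    rw [Finset.sum_add_distrib, Finset.sum_add_distrib,
      Finset.sum_ite_eq' Finset.univ u (fun _ => S.card),
      Finset.sum_ite_eq' Finset.univ v (fun _ => S.card),
      if_pos (Finset.mem_univ u), if_pos (Finset.mem_univ v)] at hsum
    have : cost D' + S.card = cost D + S.card := hsum
    omega
  · -- preservation of well-satisfaction
    rintro a b - ⟨α, ⟨r, hr⟩, ⟨t, ht⟩⟩
    refine ⟨α, ⟨r, ?_⟩, ⟨t, ?_⟩⟩
    · by_cases hau : a = u
      · subst hau; exact hH2 r hr
      · exact fun e he => hmono a hau (hr e he)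
    · by_cases hbu : b = u
      · subst hbu; exact hH2' t ht
      · exact fun e he => hmono b hbu (ht e he)
  · -- WellSat D' u v
    obtain ⟨r, hr⟩ := hx
    refine ⟨x, ⟨r, hH2 r hr⟩, ⟨q, fun e he => ?_⟩⟩
    rw [hD'v, Finset.mem_union]
    by_cases hev : e ∈ D v
    · exact Or.inl hev
    · rcases hq1 e he with hdu | hdv
      · exact Or.inr (Finset.mem_sdiff.mpr ⟨Finset.mem_inter.mpr ⟨List.mem_toFinset.mpr he, hdu⟩, hev⟩)
      · exact absurd hdv hev
end

section
/- Let G be a finite connected simple graph and let R be a request set whose request graph H_R is a tree rooted at a vertex r. For u a vertex of H_R, let E_R(u) denote the set of requests lying in the subtree of H_R rooted at u, let Child(u) = {u_1, ..., u_γ} be the children of u in H_R, and for vertices u of H_R and α of G define C(u, α) as the minimum cost of a dispersal D of G that satisfies E_R(u) and such that some walk from u to α has all its edges in D_u. Then for every vertex u of H_R and every vertex α of G: C(u, α) = min over tuples (α_1, ..., α_γ) of vertices of G of [ c_min(G, { {u, α_1}, ..., {u, α_γ}, {u, α} }) + Σ_{k=1}^{γ} C(u_k, α_k) ]. -/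
open SimpleGraph Finset

/-- `x` lies in the subtree of the tree `HR` (rooted at `r`) rooted at `u`:
`u` lies on the (unique) path from `r` to `x`. -/
def InSubtree {V : Type*} (HR : SimpleGraph V) (r u x : V) : Prop :=
  HR.dist r x = HR.dist r u + HR.dist u x

/-- `E_R(u)`: the requests (edges of `HR`) lying in the subtree of `HR` rooted at `u`. -/
def ERsub {V : Type*} (HR : SimpleGraph V) (R : Finset (Sym2 V)) (r u : V) :
    Set (Sym2 V) :=
  {e | e ∈ R ∧ ∀ x ∈ e, InSubtree HR r u x}

open scoped Classical in
/-- The children of `u` in the tree `HR` rooted at `r`. -/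
noncomputable def childrenOf {V : Type*} [Fintype V] (HR : SimpleGraph V) (r u : V) :
    Finset V :=
  Finset.univ.filter (fun w => HR.Adj u w ∧ HR.dist r w = HR.dist r u + 1)

/-- `C(u, α)`: the minimum cost of a dispersal `D` of `G` satisfying `E_R(u)` such that
some walk from `u` to `α` has all its edges in `D u`. -/
noncomputable def Cfun {V : Type*} [Fintype V] (G HR : SimpleGraph V)
    (R : Finset (Sym2 V)) (r u α : V) : ℕ :=
  sInf {c | ∃ D : V → Finset (Sym2 V), IsDispersal G D ∧
    Satisfies G D (ERsub HR R r u) ∧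
    (∃ p : G.Walk u α, ∀ e ∈ p.edges, e ∈ D u) ∧ cost D = c}

section Aux

variable {V : Type*}

/-- triangle inequality for `dist` under reachability hypotheses -/
lemma dist_tri (HR : SimpleGraph V) {a b c : V} (h1 : HR.Reachable a b)
    (h2 : HR.Reachable b c) : HR.dist a c ≤ HR.dist a b + HR.dist b c := by
  obtain ⟨p, hp⟩ := h1.exists_walk_length_eq_dist
  obtain ⟨q, hq⟩ := h2.exists_walk_length_eq_dist
  rw [← hp, ← hq, ← SimpleGraph.Walk.length_append]
  exact SimpleGraph.dist_le _

/-- the full-edge dispersal witnesses nonemptiness of all our sInf sets -/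
lemma cfun_set_nonempty [Fintype V] (G HR : SimpleGraph V) (hG : G.Connected)
    (R : Finset (Sym2 V)) (r u α : V) :
    {c | ∃ D : V → Finset (Sym2 V), IsDispersal G D ∧
      Satisfies G D (ERsub HR R r u) ∧
      (∃ p : G.Walk u α, ∀ e ∈ p.edges, e ∈ D u) ∧ cost D = c}.Nonempty := by
  classical
  refine ⟨cost (fun _ => G.edgeSet.toFinset), fun _ => G.edgeSet.toFinset, ?_, ?_, ?_, rfl⟩
  · intro v e he; simpa using he
  · intro a b _
    exact ⟨(hG a b).some, fun e he => Or.inl (by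
      simpa using (hG a b).some.edges_subset_edgeSet he)⟩
  · exact ⟨(hG u α).some, fun e he => by
      simpa using (hG u α).some.edges_subset_edgeSet he⟩

lemma cmin_set_nonempty [Fintype V] (G : SimpleGraph V) (hG : G.Connected)
    (R' : Set (Sym2 V)) :
    {c | ∃ D : V → Finset (Sym2 V), IsDispersal G D ∧ Satisfies G D R' ∧
      cost D = c}.Nonempty := by
  classical
  refine ⟨cost (fun _ => G.edgeSet.toFinset), fun _ => G.edgeSet.toFinset, ?_, ?_, rfl⟩
  · intro v e he; simpa using he
  · intro a b _
    exact ⟨(hG a b).some, fun e he => Or.inl (by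
      simpa using (hG a b).some.edges_subset_edgeSet he)⟩

end Aux

section TreePart
open SimpleGraph Finset

variable {V : Type*} [Fintype V] {HR : SimpleGraph V} {R : Finset (Sym2 V)} {r u : V}

/-- In an acyclic graph, adjacent vertices are at different distances from any vertex `u`
reachable from both. -/
lemma adj_dist_ne (hacyc : HR.IsAcyclic) {x y : V} (hadj : HR.Adj x y)
    (hux : HR.Reachable u x) (huy : HR.Reachable u y) :
    HR.dist u x ≠ HR.dist u y := by
  classical
  intro hd
  obtain ⟨p, hp⟩ := hux.exists_walk_length_eq_dist
  obtain ⟨q, hq⟩ := huy.exists_walk_length_eq_dist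
  have hppath : p.IsPath := p.isPath_of_length_eq_dist hp
  have hqpath : q.IsPath := q.isPath_of_length_eq_dist hq
  -- y is not on p
  have hynp : y ∉ p.support := by
    intro hy
    have h1 : HR.dist u y ≤ (p.takeUntil y hy).length := SimpleGraph.dist_le _
    have h2 : HR.dist y x ≤ (p.dropUntil y hy).length := SimpleGraph.dist_le _
    have h3 : (p.takeUntil y hy).length + (p.dropUntil y hy).length = p.length := by
      have h3' := congrArg SimpleGraph.Walk.length (p.take_spec hy)
      rwa [SimpleGraph.Walk.length_append] at h3'
    have h4 : 0 < HR.dist y x :=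
      (SimpleGraph.Reachable.pos_dist_of_ne ⟨p.dropUntil y hy⟩ hadj.ne')
    omega
  -- two distinct paths从 u to y
  have hconcat : (p.concat hadj).IsPath := by
    rw [← SimpleGraph.Walk.isPath_reverse_iff, SimpleGraph.Walk.reverse_concat]
    exact (SimpleGraph.Walk.cons_isPath_iff _ _).2
      ⟨hppath.reverse, by simpa using hynp⟩
  have := hacyc.path_unique ⟨p.concat hadj, hconcat⟩ ⟨q, hqpath⟩
  have hlen : (p.concat hadj).length = q.length := by
    rw [show (p.concat hadj) = q from congrArg Subtype.val this]
  rw [SimpleGraph.Walk.length_concat] at hlen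
  omega

/-- The child-capture lemma: if `x ≠ u` is in the subtree of `u` and `y` is a neighbor of `x`
one step further from `u`, both in the subtree of `u`, then some child `w` of `u` contains both
in its subtree. -/
lemma child_capture
    (htree : ∀ a ∈ HR.support, ∀ b ∈ HR.support, HR.Reachable a b)
    (hr : r ∈ HR.support) (hu : u ∈ HR.support)
    {x y : V} (hxs : x ∈ HR.support) (hys : y ∈ HR.support)
    (hxu : x ≠ u) (hadj : HR.Adj x y)
    (hx : InSubtree HR r u x) (hy : InSubtree HR r u y)
    (hstep : HR.dist u y = HR.dist u x + 1) :
    ∃ w, w ∈ childrenOf HR r u ∧ InSubtree HR r w x ∧ InSubtree HR r w y := by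
  classical
  have Rux : HR.Reachable u x := htree u hu x hxs
  have hdpos : 0 < HR.dist u x := Rux.pos_dist_of_ne (Ne.symm hxu)
  obtain ⟨p, hp⟩ := Rux.exists_walk_length_eq_dist
  cases p with
  | nil => simp at hp; simp at hdpos
  | cons h p' =>
    rename_i w
    have hws : w ∈ HR.support := (SimpleGraph.mem_support HR).2 ⟨u, h.symm⟩
    have hlen : p'.length + 1 = HR.dist u x := by
      simpa [SimpleGraph.Walk.length_cons] using hp
    have hwx_le : HR.dist w x ≤ p'.length := SimpleGraph.dist_le _
    have hux_le : HR.dist u x ≤ HR.dist w x + 1 := by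
      have := dist_tri HR (⟨h.toWalk⟩ : HR.Reachable u w) (⟨p'⟩ : HR.Reachable w x)
      have h1 : HR.dist u w = 1 := SimpleGraph.dist_eq_one_iff_adj.2 h
      omega
    have hwx : HR.dist w x + 1 = HR.dist u x := by omega
    have huw : HR.dist u w = 1 := SimpleGraph.dist_eq_one_iff_adj.2 h
    -- dist r w = dist r u + 1
    have hrw_le : HR.dist r w ≤ HR.dist r u + 1 := by
      have := dist_tri HR (htree r hr u hu) (⟨h.toWalk⟩ : HR.Reachable u w)
      omega
    have hrx_le : HR.dist r x ≤ HR.dist r w + HR.dist w x :=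
      dist_tri HR (htree r hr w hws) (⟨p'⟩ : HR.Reachable w x)
    have hrw : HR.dist r w = HR.dist r u + 1 := by
      unfold InSubtree at hx; omega
    -- dist w y = dist u x
    have hwy_le : HR.dist w y ≤ HR.dist w x + 1 := by
      have := dist_tri HR (⟨p'⟩ : HR.Reachable w x) (⟨hadj.toWalk⟩ : HR.Reachable x y)
      have : HR.dist x y = 1 := SimpleGraph.dist_eq_one_iff_adj.2 hadj
      omega
    have huy_le : HR.dist u y ≤ 1 + HR.dist w y := by
      have := dist_tri HR (⟨h.toWalk⟩ : HR.Reachable u w) (htree w hws y hys)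
      omega
    have hwy : HR.dist w y + 1 = HR.dist u y := by omega
    have hry_le : HR.dist r y ≤ HR.dist r w + HR.dist w y :=
      dist_tri HR (htree r hr w hws) (htree w hws y hys)
    refine ⟨w, ?_, ?_, ?_⟩
    · simp only [childrenOf, Finset.mem_filter, Finset.mem_univ, true_and]
      exact ⟨h, hrw⟩
    · unfold InSubtree at hx ⊢; omega
    · unfold InSubtree at hy ⊢; omega

/-- Decomposition of subtree requests: each request under `u` is either a request
`{u, w}` to a child `w`, or lies in a child's subtree. -/
lemma ERsub_cases (hdiag : ∀ e ∈ R, ¬ e.IsDiag) (hHR : HR = SimpleGraph.fromEdgeSet ↑R)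
    (hacyc : HR.IsAcyclic)
    (htree : ∀ a ∈ HR.support, ∀ b ∈ HR.support, HR.Reachable a b)
    (hr : r ∈ HR.support) (hu : u ∈ HR.support) {e : Sym2 V}
    (he : e ∈ ERsub HR R r u) :
    (∃ w ∈ childrenOf HR r u, e = s(u, w)) ∨
    (∃ w ∈ childrenOf HR r u, e ∈ ERsub HR R r w) := by
  classical
  obtain ⟨heR, hsub⟩ := he
  induction e using Sym2.ind with
  | _ x y =>
    have hxyne : x ≠ y := by
      intro hxy; exact hdiag _ heR (by simp [hxy])
    have hadj : HR.Adj x y := by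
      rw [hHR]
      exact (SimpleGraph.fromEdgeSet_adj _).2 ⟨by simpa using heR, hxyne⟩
    have hxs : x ∈ HR.support := (SimpleGraph.mem_support HR).2 ⟨y, hadj⟩
    have hys : y ∈ HR.support := (SimpleGraph.mem_support HR).2 ⟨x, hadj.symm⟩
    have hx : InSubtree HR r u x := hsub x (by simp)
    have hy : InSubtree HR r u y := hsub y (by simp)
    by_cases hxu : x = u
    · subst hxu
      left
      refine ⟨y, ?_, rfl⟩
      simp only [childrenOf, Finset.mem_filter, Finset.mem_univ, true_and]
      refine ⟨hadj, ?_⟩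
      have h1 : HR.dist x y = 1 := SimpleGraph.dist_eq_one_iff_adj.2 hadj
      unfold InSubtree at hy; omega
    by_cases hyu : y = u
    · subst hyu
      left
      refine ⟨x, ?_, Sym2.eq_swap⟩
      simp only [childrenOf, Finset.mem_filter, Finset.mem_univ, true_and]
      refine ⟨hadj.symm, ?_⟩
      have h1 : HR.dist y x = 1 := SimpleGraph.dist_eq_one_iff_adj.2 hadj.symm
      unfold InSubtree at hx; omega
    -- x ≠ u, y ≠ u
    have hne : HR.dist u x ≠ HR.dist u y :=
      adj_dist_ne hacyc hadj (htree u hu x hxs) (htree u hu y hys)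
    rcases lt_or_gt_of_ne hne with hlt | hgt
    · -- dist u y = dist u x + 1
      have hstep : HR.dist u y = HR.dist u x + 1 := by
        have := dist_tri HR (htree u hu x hxs) (⟨hadj.toWalk⟩ : HR.Reachable x y)
        have : HR.dist x y = 1 := SimpleGraph.dist_eq_one_iff_adj.2 hadj
        omega
      obtain ⟨w, hw, hwx, hwy⟩ :=
        child_capture htree hr hu hxs hys hxu hadj hx hy hstep
      right
      refine ⟨w, hw, heR, ?_⟩
      intro z hz
      rw [Sym2.mem_iff] at hz
      rcases hz with rfl | rfl
      exacts [hwx, hwy]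
    · have hstep : HR.dist u x = HR.dist u y + 1 := by
        have := dist_tri HR (htree u hu y hys) (⟨hadj.symm.toWalk⟩ : HR.Reachable y x)
        have : HR.dist y x = 1 := SimpleGraph.dist_eq_one_iff_adj.2 hadj.symm
        omega
      obtain ⟨w, hw, hwy, hwx⟩ :=
        child_capture htree hr hu hys hxs hyu hadj.symm hy hx hstep
      right
      refine ⟨w, hw, heR, ?_⟩
      intro z hz
      rw [Sym2.mem_iff] at hz
      rcases hz with rfl | rfl
      exacts [hwx, hwy]

end TreePart

section TreePart2
open SimpleGraph Finset

variable {V : Type*} [Fintype V] {HR : SimpleGraph V} {R : Finset (Sym2 V)} {r u : V}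

/-- On geodesics in an acyclic graph, the vertex at a given distance is unique. -/
lemma dist_unique_mid (hacyc : HR.IsAcyclic) {z m₁ m₂ : V}
    (h1r : HR.Reachable r m₁) (h1z : HR.Reachable m₁ z)
    (h2r : HR.Reachable r m₂) (h2z : HR.Reachable m₂ z)
    (hd : HR.dist r z = HR.dist r m₁ + HR.dist m₁ z)
    (hd2 : HR.dist r z = HR.dist r m₂ + HR.dist m₂ z)
    (hm : HR.dist r m₁ = HR.dist r m₂) : m₁ = m₂ := by
  classical
  obtain ⟨p₁, hp₁⟩ := h1r.exists_walk_length_eq_dist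
  obtain ⟨q₁, hq₁⟩ := h1z.exists_walk_length_eq_dist
  obtain ⟨p₂, hp₂⟩ := h2r.exists_walk_length_eq_dist
  obtain ⟨q₂, hq₂⟩ := h2z.exists_walk_length_eq_dist
  have hw₁ : (p₁.append q₁).length = HR.dist r z := by
    rw [SimpleGraph.Walk.length_append, hp₁, hq₁, hd]
  have hw₂ : (p₂.append q₂).length = HR.dist r z := by
    rw [SimpleGraph.Walk.length_append, hp₂, hq₂, hd2]
  have hpath₁ := (p₁.append q₁).isPath_of_length_eq_dist hw₁
  have hpath₂ := (p₂.append q₂).isPath_of_length_eq_dist hw₂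
  have heq := hacyc.path_unique ⟨p₁.append q₁, hpath₁⟩ ⟨p₂.append q₂, hpath₂⟩
  have heqw : p₁.append q₁ = p₂.append q₂ := congrArg Subtype.val heq
  have h₁ : (p₁.append q₁).getVert (HR.dist r m₁) = m₁ := by
    rw [SimpleGraph.Walk.getVert_append]
    simp [hp₁]
  have h₂ : (p₂.append q₂).getVert (HR.dist r m₂) = m₂ := by
    rw [SimpleGraph.Walk.getVert_append]
    simp [hp₂]
  rw [← h₁, ← h₂, ← hm, heqw]

/-- subtree transitivity -/
lemma subtree_trans
    (htree : ∀ a ∈ HR.support, ∀ b ∈ HR.support, HR.Reachable a b)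
    (hr : r ∈ HR.support) (hu : u ∈ HR.support) {w x : V}
    (hws : w ∈ HR.support) (hxs : x ∈ HR.support)
    (huw : InSubtree HR r u w) (hwx : InSubtree HR r w x) :
    InSubtree HR r u x := by
  have t1 : HR.dist r x ≤ HR.dist r u + HR.dist u x :=
    dist_tri HR (htree r hr u hu) (htree u hu x hxs)
  have t2 : HR.dist u x ≤ HR.dist u w + HR.dist w x :=
    dist_tri HR (htree u hu w hws) (htree w hws x hxs)
  have t3 : HR.dist r w ≤ HR.dist r u + HR.dist u w :=
    dist_tri HR (htree r hr u hu) (htree u hu w hws)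
  unfold InSubtree at huw hwx ⊢
  omega

/-- A child `c` of a vertex `b` inside `u`'s subtree is inside `u`'s subtree. -/
lemma subtree_step
    (htree : ∀ a ∈ HR.support, ∀ b ∈ HR.support, HR.Reachable a b)
    (hr : r ∈ HR.support) (hu : u ∈ HR.support) {b c : V}
    (hbs : b ∈ HR.support)
    (hb : InSubtree HR r u b) (hc : c ∈ childrenOf HR r b) :
    InSubtree HR r u c := by
  simp only [childrenOf, Finset.mem_filter, Finset.mem_univ, true_and] at hc
  obtain ⟨hadj, hdist⟩ := hc
  have hcs : c ∈ HR.support := (SimpleGraph.mem_support HR).2 ⟨b, hadj.symm⟩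
  have hbc : HR.dist b c = 1 := SimpleGraph.dist_eq_one_iff_adj.2 hadj
  have t1 : HR.dist r c ≤ HR.dist r u + HR.dist u c :=
    dist_tri HR (htree r hr u hu) (htree u hu c hcs)
  have t2 : HR.dist u c ≤ HR.dist u b + HR.dist b c :=
    dist_tri HR (htree u hu b hbs) (htree b hbs c hcs)
  unfold InSubtree at hb ⊢
  omega

/-- `u` is in its own subtree. -/
lemma subtree_self (r u : V) : InSubtree HR r u u := by
  unfold InSubtree; simp [SimpleGraph.dist_self]

/-- requests to children are in the subtree request set -/
lemma request_mem_ERsub (hHR : HR = SimpleGraph.fromEdgeSet ↑R)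
    (htree : ∀ a ∈ HR.support, ∀ b ∈ HR.support, HR.Reachable a b)
    (hr : r ∈ HR.support) (hu : u ∈ HR.support) {b c : V}
    (hbs : b ∈ HR.support)
    (hb : InSubtree HR r u b) (hc : c ∈ childrenOf HR r b) :
    s(b, c) ∈ ERsub HR R r u := by
  have hcu : InSubtree HR r u c := subtree_step htree hr hu hbs hb hc
  simp only [childrenOf, Finset.mem_filter, Finset.mem_univ, true_and] at hc
  obtain ⟨hadj, _⟩ := hc
  have hR : s(b, c) ∈ R := by
    rw [hHR] at hadj
    have := (SimpleGraph.fromEdgeSet_adj _).1 hadj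
    simpa using this.1
  refine ⟨hR, ?_⟩
  intro x hx
  rw [Sym2.mem_iff] at hx
  rcases hx with rfl | rfl
  exacts [hb, hcu]

/-- `u` does not lie in the subtree of a child of `u`'s subtree. -/
lemma not_in_subtree_of_child {w : V} (hw : w ∈ childrenOf HR r u) :
    ¬ InSubtree HR r w u := by
  simp only [childrenOf, Finset.mem_filter, Finset.mem_univ, true_and] at hw
  intro h
  unfold InSubtree at h
  omega

/-- distinct children have disjoint subtrees -/
lemma subtree_disjoint (hacyc : HR.IsAcyclic)
    (htree : ∀ a ∈ HR.support, ∀ b ∈ HR.support, HR.Reachable a b)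
    (hr : r ∈ HR.support) {w w' x : V}
    (hw : w ∈ childrenOf HR r u) (hw' : w' ∈ childrenOf HR r u)
    (hx : InSubtree HR r w x) (hx' : InSubtree HR r w' x) : w = w' := by
  simp only [childrenOf, Finset.mem_filter, Finset.mem_univ, true_and] at hw hw'
  obtain ⟨hadj, hd⟩ := hw
  obtain ⟨hadj', hd'⟩ := hw'
  have hws : w ∈ HR.support := (SimpleGraph.mem_support HR).2 ⟨u, hadj.symm⟩
  have hws' : w' ∈ HR.support := (SimpleGraph.mem_support HR).2 ⟨u, hadj'.symm⟩
  -- x is reachable from r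
  have hrx : HR.Reachable r x := by
    have : HR.dist r x ≠ 0 := by
      unfold InSubtree at hx; omega
    exact SimpleGraph.Reachable.of_dist_ne_zero this
  have hwx : HR.Reachable w x := ((htree r hr w hws).symm.trans hrx)
  have hwx' : HR.Reachable w' x := ((htree r hr w' hws').symm.trans hrx)
  exact dist_unique_mid hacyc (htree r hr w hws) hwx (htree r hr w' hws') hwx'
    hx hx' (by omega)

/-- uniqueness of the parent -/
lemma parent_unique (hacyc : HR.IsAcyclic)
    (htree : ∀ a ∈ HR.support, ∀ b ∈ HR.support, HR.Reachable a b)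
    (hr : r ∈ HR.support) {a b z : V}
    (hab : b ∈ childrenOf HR r a) (hadj : HR.Adj z b)
    (hz : HR.dist r z + 1 = HR.dist r b) : z = a := by
  simp only [childrenOf, Finset.mem_filter, Finset.mem_univ, true_and] at hab
  obtain ⟨hadja, hd⟩ := hab
  have has : a ∈ HR.support := (SimpleGraph.mem_support HR).2 ⟨b, hadja⟩
  have hzs : z ∈ HR.support := (SimpleGraph.mem_support HR).2 ⟨b, hadj⟩
  have hbs : b ∈ HR.support := (SimpleGraph.mem_support HR).2 ⟨z, hadj.symm⟩
  have h1 : HR.dist z b = 1 := SimpleGraph.dist_eq_one_iff_adj.2 hadj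
  have h2 : HR.dist a b = 1 := SimpleGraph.dist_eq_one_iff_adj.2 hadja
  exact dist_unique_mid hacyc (htree r hr z hzs) (htree z hzs b hbs)
    (htree r hr a has) (htree a has b hbs) (by omega) (by omega) (by omega)

end TreePart2

section Reach
open SimpleGraph Finset

variable {V : Type*}

/-- Vertices reachable from `b` by walks using only edges of `S`. -/
def ReachS (G : SimpleGraph V) (S : Finset (Sym2 V)) (b : V) : Set V :=
  {x | ∃ p : G.Walk b x, ∀ e ∈ p.edges, e ∈ S}

lemma reachS_self (G : SimpleGraph V) (S : Finset (Sym2 V)) (b : V) :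
    b ∈ ReachS G S b := ⟨SimpleGraph.Walk.nil, by simp⟩

lemma reachS_mono (G : SimpleGraph V) {S T : Finset (Sym2 V)} (h : S ⊆ T) (b : V) :
    ReachS G S b ⊆ ReachS G T b := by
  rintro x ⟨p, hp⟩
  exact ⟨p, fun e he => h (hp e he)⟩

/-- All support vertices of an `S`-walk starting in `ReachS` are in `ReachS`. -/
lemma reachS_support {G : SimpleGraph V} {S : Finset (Sym2 V)} {b : V} :
    ∀ {x z : V} (p : G.Walk x z), (∀ e ∈ p.edges, e ∈ S) → x ∈ ReachS G S b →
      ∀ v ∈ p.support, v ∈ ReachS G S b := by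
  intro x z p
  induction p with
  | nil =>
    intro _ hx v hv
    simp at hv; subst hv; exact hx
  | cons h p ih =>
    rename_i w₁ w₂ w₃
    intro hp hx v hv
    obtain ⟨q, hq⟩ := hx
    have hw₂ : w₂ ∈ ReachS G S b := by
      refine ⟨q.append h.toWalk, ?_⟩
      intro e he
      rw [SimpleGraph.Walk.edges_append, List.mem_append] at he
      rcases he with he | he
      · exact hq e he
      · simp only [SimpleGraph.Walk.edges_cons, SimpleGraph.Walk.edges_nil] at he
        rcases List.mem_singleton.1 he with rfl
        exact hp _ (by simp)
    rw [SimpleGraph.Walk.support_cons, List.mem_cons] at hv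
    rcases hv with rfl | hv
    · exact ⟨q, hq⟩
    · exact ih (fun e he => hp e (by simp [he])) hw₂ v hv

/-- A walk from `b` inside `S` avoids any edge of `S` detached from `ReachS G S b`. -/
lemma reachS_avoid {G : SimpleGraph V} {S : Finset (Sym2 V)} {b : V}
    {h : Sym2 V} (hdet : ∀ x ∈ h, x ∉ ReachS G S b)
    {z : V} (p : G.Walk b z) (hp : ∀ e ∈ p.edges, e ∈ S) : h ∉ p.edges := by
  induction h using Sym2.ind with
  | _ c d =>
    intro hmem
    exact hdet c (by simp)
      (reachS_support p hp (reachS_self G S b) c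
        (SimpleGraph.Walk.fst_mem_support_of_mem_edges p hmem))

/-- closure of `ReachS` for edges of `S` incident to it (for graphs where `S ⊆ edgeSet`). -/
lemma reachS_closure {G : SimpleGraph V} {S : Finset (Sym2 V)} {b : V}
    (hS : ∀ e ∈ S, e ∈ G.edgeSet) {x y : V} (hxy : s(x, y) ∈ S)
    (hx : x ∈ ReachS G S b) : y ∈ ReachS G S b := by
  obtain ⟨p, hp⟩ := hx
  by_cases hxyeq : x = y
  · subst hxyeq; exact ⟨p, hp⟩
  · have hadj : G.Adj x y := by
      have := hS _ hxy
      rwa [SimpleGraph.mem_edgeSet] at this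
    refine ⟨p.append hadj.toWalk, ?_⟩
    intro e he
    rw [SimpleGraph.Walk.edges_append, List.mem_append] at he
    rcases he with he | he
    · exact hp e he
    · simp only [SimpleGraph.Walk.edges_cons, SimpleGraph.Walk.edges_nil] at he
      rcases List.mem_singleton.1 he with rfl
      exact hxy

/-- The boundary-edge extraction lemma: a walk with edges in `S ∪ T` from a vertex of
`ReachS G S b` to a vertex outside it passes some edge of `T \ S` with an endpoint
in `ReachS G S b`. -/
lemma boundary_edge {G : SimpleGraph V} {S T : Finset (Sym2 V)} {b : V}
    (hS : ∀ e ∈ S, e ∈ G.edgeSet) :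
    ∀ {x z : V} (p : G.Walk x z), (∀ e ∈ p.edges, e ∈ S ∨ e ∈ T) →
      x ∈ ReachS G S b → z ∉ ReachS G S b →
      ∃ h' : Sym2 V, h' ∈ T ∧ h' ∉ S ∧ ∃ ζ ∈ h', ζ ∈ ReachS G S b := by
  intro x z p
  induction p with
  | nil => intro _ hx hz; exact absurd hx hz
  | cons hadj p ih =>
    rename_i w₁ w₂ w₃
    intro hp hx hz
    by_cases he : s(w₁, w₂) ∈ S
    · exact ih (fun e hep => hp e (by simp [hep])) (reachS_closure hS he hx) hz
    · have heT : s(w₁, w₂) ∈ T := by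
        rcases hp s(w₁, w₂) (by simp) with h | h
        · exact absurd h he
        · exact h
      exact ⟨s(w₁, w₂), heT, he, w₁, by simp, hx⟩

end Reach

section Psi
open SimpleGraph Finset
open scoped Classical

variable {V : Type*} [Fintype V]

/-- number of edges of `S` detached from `v` -/
noncomputable def detCard (G : SimpleGraph V) (S : Finset (Sym2 V)) (v : V) : ℕ :=
  (S.filter (fun e => ¬ ∃ x ∈ e, x ∈ ReachS G S v)).card

/-- total number of detached pairs of a dispersal -/
noncomputable def psi (G : SimpleGraph V) (D : V → Finset (Sym2 V)) : ℕ :=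
  ∑ v, detCard G (D v) v

lemma sum_split (f : V → ℕ) {a b : V} (hab : a ≠ b) :
    ∑ v, f v = f a + (f b + ∑ v ∈ (Finset.univ.erase a).erase b, f v) := by
  rw [← Finset.add_sum_erase _ _ (Finset.mem_univ a)]
  congr 1
  rw [← Finset.add_sum_erase _ _ (Finset.mem_erase.2 ⟨Ne.symm hab, Finset.mem_univ b⟩)]

lemma reach_erase_detached {G : SimpleGraph V} {S : Finset (Sym2 V)} {b : V}
    {h : Sym2 V} (hdet : ∀ x ∈ h, x ∉ ReachS G S b) :
    ReachS G (S.erase h) b = ReachS G S b := by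
  apply Set.Subset.antisymm (reachS_mono G (Finset.erase_subset _ _) b)
  rintro x ⟨p, hp⟩
  refine ⟨p, fun e he => Finset.mem_erase.2 ⟨?_, hp e he⟩⟩
  intro hcontra
  subst hcontra
  exact reachS_avoid hdet p hp he

lemma detCard_erase {G : SimpleGraph V} {S : Finset (Sym2 V)} {b : V}
    {h : Sym2 V} (hdet : ∀ x ∈ h, x ∉ ReachS G S b) (hh : h ∈ S) :
    detCard G (S.erase h) b + 1 = detCard G S b := by
  unfold detCard
  have hre : ReachS G (S.erase h) b = ReachS G S b := reach_erase_detached hdet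
  have : (S.erase h).filter (fun e => ¬ ∃ x ∈ e, x ∈ ReachS G (S.erase h) b)
      = (S.filter (fun e => ¬ ∃ x ∈ e, x ∈ ReachS G S b)).erase h := by
    rw [Finset.filter_erase]
    congr 1
    apply Finset.filter_congr
    intro e _
    rw [hre]
  rw [this]
  rw [Finset.card_erase_of_mem]
  · have hmem : h ∈ S.filter (fun e => ¬ ∃ x ∈ e, x ∈ ReachS G S b) := by
      refine Finset.mem_filter.2 ⟨hh, ?_⟩
      push_neg
      exact hdet
    have := Finset.card_pos.2 ⟨h, hmem⟩
    omega
  · refine Finset.mem_filter.2 ⟨hh, ?_⟩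
    push_neg
    exact hdet

lemma detCard_insert {G : SimpleGraph V} {S : Finset (Sym2 V)} {a : V}
    {h : Sym2 V} {ξ : V} (hξ : ξ ∈ h) (hreach : ξ ∈ ReachS G S a) :
    detCard G (insert h S) a ≤ detCard G S a := by
  unfold detCard
  apply Finset.card_le_card
  intro e he
  rw [Finset.mem_filter] at he
  obtain ⟨hmem, hP⟩ := he
  rcases Finset.mem_insert.1 hmem with rfl | hmem'
  · exfalso
    exact hP ⟨ξ, hξ, reachS_mono G (Finset.subset_insert _ _) a hreach⟩
  · refine Finset.mem_filter.2 ⟨hmem', ?_⟩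
    intro ⟨x, hx, hxr⟩
    exact hP ⟨x, hx, reachS_mono G (Finset.subset_insert _ _) a hxr⟩

/-- the exchange move: move edge `h` from `D b` to `D a` -/
noncomputable def moveEdge (D : V → Finset (Sym2 V)) (a b : V) (h : Sym2 V) :
    V → Finset (Sym2 V) :=
  Function.update (Function.update D b ((D b).erase h)) a (insert h (D a))

lemma moveEdge_apply_a {D : V → Finset (Sym2 V)} {a b : V} {h : Sym2 V} :
    moveEdge D a b h a = insert h (D a) := by
  unfold moveEdge; simp

lemma moveEdge_apply_b {D : V → Finset (Sym2 V)} {a b : V} {h : Sym2 V}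
    (hab : a ≠ b) : moveEdge D a b h b = (D b).erase h := by
  unfold moveEdge
  rw [Function.update_of_ne (Ne.symm hab), Function.update_self]

lemma moveEdge_apply_other {D : V → Finset (Sym2 V)} {a b : V} {h : Sym2 V}
    {v : V} (hva : v ≠ a) (hvb : v ≠ b) : moveEdge D a b h v = D v := by
  unfold moveEdge
  rw [Function.update_of_ne hva, Function.update_of_ne hvb]

lemma moveEdge_superset {D : V → Finset (Sym2 V)} {a b : V} {h : Sym2 V}
    (hab : a ≠ b) {v : V} (hvb : v ≠ b) : D v ⊆ moveEdge D a b h v := by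
  by_cases hva : v = a
  · subst hva; rw [moveEdge_apply_a]; exact Finset.subset_insert _ _
  · rw [moveEdge_apply_other hva hvb]

lemma cost_moveEdge {D : V → Finset (Sym2 V)} {a b : V} {h : Sym2 V}
    (hab : a ≠ b) (hh : h ∈ D b) (hna : h ∉ D a) :
    cost (moveEdge D a b h) = cost D := by
  unfold cost
  rw [sum_split (fun v => (moveEdge D a b h v).card) hab,
    sum_split (fun v => (D v).card) hab]
  have h1 : (moveEdge D a b h a).card = (D a).card + 1 := by
    rw [moveEdge_apply_a, Finset.card_insert_of_notMem hna]
  have h2 : (moveEdge D a b h b).card + 1 = (D b).card := by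
    rw [moveEdge_apply_b hab, Finset.card_erase_of_mem hh]
    have := Finset.card_pos.2 ⟨h, hh⟩
    omega
  have h3 : ∑ v ∈ (Finset.univ.erase a).erase b, (moveEdge D a b h v).card
      = ∑ v ∈ (Finset.univ.erase a).erase b, (D v).card := by
    apply Finset.sum_congr rfl
    intro v hv
    simp only [Finset.mem_erase] at hv
    rw [moveEdge_apply_other hv.2.1 hv.1]
  omega

lemma psi_moveEdge {G : SimpleGraph V} {D : V → Finset (Sym2 V)} {a b : V} {h : Sym2 V}
    (hab : a ≠ b) (hh : h ∈ D b)
    (hdet : ∀ x ∈ h, x ∉ ReachS G (D b) b)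
    {ξ : V} (hξ : ξ ∈ h) (hreach : ξ ∈ ReachS G (D a) a) :
    psi G (moveEdge D a b h) < psi G D := by
  unfold psi
  rw [sum_split (fun v => detCard G (moveEdge D a b h v) v) hab,
    sum_split (fun v => detCard G (D v) v) hab]
  have h1 : detCard G (moveEdge D a b h a) a ≤ detCard G (D a) a := by
    rw [moveEdge_apply_a]
    exact detCard_insert hξ hreach
  have h2 : detCard G (moveEdge D a b h b) b + 1 = detCard G (D b) b := by
    rw [moveEdge_apply_b hab]
    exact detCard_erase hdet hh
  have h3 : ∑ v ∈ (Finset.univ.erase a).erase b, detCard G (moveEdge D a b h v) v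
      = ∑ v ∈ (Finset.univ.erase a).erase b, detCard G (D v) v := by
    apply Finset.sum_congr rfl
    intro v hv
    simp only [Finset.mem_erase] at hv
    rw [moveEdge_apply_other hv.2.1 hv.1]
  omega

end Psi

section Descent
open SimpleGraph Finset
open scoped Classical

variable {V : Type*} [Fintype V]

lemma mem_childrenOf {HR : SimpleGraph V} {r u w : V} :
    w ∈ childrenOf HR r u ↔ HR.Adj u w ∧ HR.dist r w = HR.dist r u + 1 := by
  simp [childrenOf]

lemma descent (G HR : SimpleGraph V) (R : Finset (Sym2 V))
    (hdiag : ∀ e ∈ R, ¬ e.IsDiag)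
    (hHR : HR = SimpleGraph.fromEdgeSet ↑R)
    (hacyc : HR.IsAcyclic)
    (htree : ∀ a ∈ HR.support, ∀ b ∈ HR.support, HR.Reachable a b)
    (r : V) (hr : r ∈ HR.support) (u : V) (hu : u ∈ HR.support) (α : V)
    (D : V → Finset (Sym2 V)) (hdisp : IsDispersal G D)
    (hsat : Satisfies G D (ERsub HR R r u))
    (hq : ∃ p : G.Walk u α, ∀ e ∈ p.edges, e ∈ D u)
    (hpsimin : ∀ D' : V → Finset (Sym2 V), IsDispersal G D' →
      Satisfies G D' (ERsub HR R r u) →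
      (∃ p : G.Walk u α, ∀ e ∈ p.edges, e ∈ D' u) → cost D' = cost D →
      psi G D ≤ psi G D') :
    ∀ (n : ℕ) (a b : V), Fintype.card V ≤ HR.dist r b + n →
      b ∈ childrenOf HR r a → InSubtree HR r u a → InSubtree HR r u b →
      ∀ h : Sym2 V, h ∈ D b → h ∉ D a →
      (∀ x ∈ h, x ∉ ReachS G (D b) b) →
      (∃ ξ ∈ h, ξ ∈ ReachS G (D a) a) → False := by
  intro n
  induction n with
  | zero =>
    intro a b hcard hab _ _ _ _ _ _ _
    obtain ⟨hadj, _⟩ := mem_childrenOf.1 hab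
    have hbs : b ∈ HR.support := (SimpleGraph.mem_support HR).2 ⟨a, hadj.symm⟩
    obtain ⟨p, hp⟩ := (htree r hr b hbs).exists_walk_length_eq_dist
    have := (p.isPath_of_length_eq_dist hp).length_lt
    omega
  | succ n ih =>
    intro a b hcard hab hsuba hsubb h hhb hha hdet hanchor
    obtain ⟨ξ, hξh, hξa⟩ := hanchor
    obtain ⟨hadjab, hdab⟩ := mem_childrenOf.1 hab
    have has : a ∈ HR.support := (SimpleGraph.mem_support HR).2 ⟨b, hadjab⟩
    have hbs : b ∈ HR.support := (SimpleGraph.mem_support HR).2 ⟨a, hadjab.symm⟩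
    have hab_ne : a ≠ b := by
      intro hcontra; rw [hcontra] at hdab; omega
    set D' := moveEdge D a b h with hD'
    have hD'a : D' a = insert h (D a) := moveEdge_apply_a
    have hD'b : D' b = (D b).erase h := moveEdge_apply_b hab_ne
    have hD'other : ∀ v, v ≠ a → v ≠ b → D' v = D v :=
      fun v hva hvb => moveEdge_apply_other hva hvb
    have hD'sup : ∀ v, v ≠ b → D v ⊆ D' v := fun v hv => moveEdge_superset hab_ne hv
    have hD'disp : IsDispersal G D' := by
      intro v e he
      by_cases hva : v = a
      · rw [hva, hD'a] at he
        rcases Finset.mem_insert.1 he with rfl | he'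
        · exact hdisp b e hhb
        · exact hdisp a e he'
      · by_cases hvb : v = b
        · rw [hvb, hD'b] at he
          exact hdisp b e (Finset.mem_of_mem_erase he)
        · rw [hD'other v hva hvb] at he
          exact hdisp v e he
    have hbu : b ≠ u := by
      intro hcontra
      unfold InSubtree at hsuba
      rw [hcontra] at hdab
      omega
    have hq' : ∃ p : G.Walk u α, ∀ e ∈ p.edges, e ∈ D' u := by
      obtain ⟨p, hp⟩ := hq
      exact ⟨p, fun e he => hD'sup u (Ne.symm hbu) (hp e he)⟩
    by_cases hval : Satisfies G D' (ERsub HR R r u)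
    · -- the move is valid : psi decreases, contradiction with minimality
      have hcost : cost D' = cost D := cost_moveEdge hab_ne hhb hha
      have hle := hpsimin D' hD'disp hval hq' hcost
      have hlt : psi G D' < psi G D := psi_moveEdge hab_ne hhb hdet hξh hξa
      omega
    · -- a request is broken; it must be a request from b to one of its children
      rw [Satisfies] at hval
      push_neg at hval
      obtain ⟨x, y, hxy, hnwalk⟩ := hval
      have hnwalk' : ¬ ∃ p : G.Walk x y, ∀ e ∈ p.edges, e ∈ D' x ∨ e ∈ D' y := by
        rintro ⟨p, hp⟩
        obtain ⟨e, he, h1, h2⟩ := hnwalk p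
        rcases hp e he with hm | hm
        exacts [h1 hm, h2 hm]
      -- the broken request involves b
      have hunion_ab : ∀ e, (e ∈ D a ∨ e ∈ D b) → (e ∈ D' a ∨ e ∈ D' b) := by
        intro e he
        rcases he with he | he
        · exact Or.inl (by rw [hD'a]; exact Finset.mem_insert_of_mem he)
        · by_cases heh : e = h
          · subst heh; exact Or.inl (by rw [hD'a]; exact Finset.mem_insert_self _ _)
          · exact Or.inr (by rw [hD'b]; exact Finset.mem_erase.2 ⟨heh, he⟩)
      have hkey : ∃ c, c ∈ childrenOf HR r b ∧
          ¬ ∃ p : G.Walk b c, ∀ e ∈ p.edges, e ∈ D' b ∨ e ∈ D' c := by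
        -- analyse who x and y are
        have hb_mem : x = b ∨ y = b := by
          by_contra hcon
          push_neg at hcon
          obtain ⟨p, hp⟩ := hsat x y hxy
          refine hnwalk' ⟨p, ?_⟩
          intro e he
          rcases hp e he with h1 | h1
          · exact Or.inl (hD'sup x hcon.1 h1)
          · exact Or.inr (hD'sup y hcon.2 h1)
        -- helper handling both orientations
        have main : ∀ z : V, s(b, z) ∈ ERsub HR R r u →
            (¬ ∃ p : G.Walk b z, ∀ e ∈ p.edges, e ∈ D' b ∨ e ∈ D' z) →
            ∃ c, c ∈ childrenOf HR r b ∧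
              ¬ ∃ p : G.Walk b c, ∀ e ∈ p.edges, e ∈ D' b ∨ e ∈ D' c := by
          intro z hz hnw
          have hzb_ne : b ≠ z := by
            intro hcontra
            subst hcontra
            exact hdiag _ hz.1 (by simp)
          have hza : z ≠ a := by
            intro hcontra
            subst hcontra
            obtain ⟨p, hp⟩ := hsat b z hz
            refine hnw ⟨p, fun e he => ?_⟩
            rcases hunion_ab e ((hp e he).symm.imp id id) with h1 | h1
            · exact Or.inr h1
            · exact Or.inl h1
          have hadjbz : HR.Adj b z := by
            rw [hHR]
            refine (SimpleGraph.fromEdgeSet_adj _).2 ⟨by simpa using hz.1, hzb_ne⟩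
          have hzs : z ∈ HR.support := (SimpleGraph.mem_support HR).2 ⟨b, hadjbz.symm⟩
          have hdich : HR.dist r z + 1 = HR.dist r b ∨ HR.dist r b + 1 = HR.dist r z := by
            have hne := adj_dist_ne hacyc hadjbz (htree r hr b hbs) (htree r hr z hzs)
            have h1 : HR.dist b z = 1 := SimpleGraph.dist_eq_one_iff_adj.2 hadjbz
            have t1 : HR.dist r z ≤ HR.dist r b + HR.dist b z :=
              dist_tri HR (htree r hr b hbs) (htree b hbs z hzs)
            have t2 : HR.dist r b ≤ HR.dist r z + HR.dist z b :=
              dist_tri HR (htree r hr z hzs) (htree z hzs b hbs)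
            have h2 : HR.dist z b = 1 := SimpleGraph.dist_eq_one_iff_adj.2 hadjbz.symm
            omega
          rcases hdich with hpar | hchild
          · exact absurd (parent_unique hacyc htree hr hab hadjbz.symm hpar) hza
          · exact ⟨z, mem_childrenOf.2 ⟨hadjbz, hchild.symm⟩, hnw⟩
        rcases hb_mem with rfl | rfl
        · -- x = b, request s(b, y)
          exact main y hxy hnwalk'
        · -- y = b, request s(x, b) = s(b, x)
          refine main x (by rwa [Sym2.eq_swap]) ?_
          rintro ⟨p, hp⟩
          refine hnwalk' ⟨p.reverse, ?_⟩
          intro e he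
          rw [SimpleGraph.Walk.edges_reverse, List.mem_reverse] at he
          exact (hp e he).symm
      obtain ⟨c, hc, hbroken⟩ := hkey
      obtain ⟨hadjbc, hdbc⟩ := mem_childrenOf.1 hc
      have hcs : c ∈ HR.support := (SimpleGraph.mem_support HR).2 ⟨b, hadjbc.symm⟩
      have hca : c ≠ a := by
        intro hcontra; rw [hcontra] at hdbc; omega
      have hcb : c ≠ b := by
        intro hcontra; rw [hcontra] at hdbc; omega
      have hD'c : D' c = D c := hD'other c hca hcb
      -- c is not reachable from b within D b
      have hcnr : c ∉ ReachS G (D b) b := by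
        intro ⟨p, hp⟩
        refine hbroken ⟨p, fun e he => Or.inl ?_⟩
        rw [hD'b]
        refine Finset.mem_erase.2 ⟨?_, hp e he⟩
        intro heh
        subst heh
        exact reachS_avoid hdet p hp he
      -- original walk for the request {b, c}
      have hreq : s(b, c) ∈ ERsub HR R r u :=
        request_mem_ERsub hHR htree hr hu hbs hsubb hc
      obtain ⟨ω, hω⟩ := hsat b c hreq
      -- boundary edge
      obtain ⟨h', hh'c, hh'b, ζ', hζ'h', hζ'r⟩ :=
        boundary_edge (T := D c) (fun e he => hdisp b e he) ω hω
          (reachS_self G (D b) b) hcnr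
      by_cases hdet' : ∀ x ∈ h', x ∉ ReachS G (D c) c
      · -- detached: descend
        have hsubc : InSubtree HR r u c := subtree_step htree hr hu hbs hsubb hc
        exact ih b c (by omega) hc hsubb hsubc h' hh'c hh'b hdet' ⟨ζ', hζ'h', hζ'r⟩
      · -- attached: we can reroute the request {b, c}, contradiction with brokenness
        push_neg at hdet'
        obtain ⟨x', hx'h', hx'r⟩ := hdet'
        -- ζ' is also reachable from c within D c
        have hζ'c : ζ' ∈ ReachS G (D c) c := by
          by_cases hxx : x' = ζ'
          · rwa [hxx] at hx'r
          · have hpair : h' = s(x', ζ') :=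
              ((Sym2.mem_and_mem_iff hxx).1 ⟨hx'h', hζ'h'⟩).symm ▸ rfl
            have : s(x', ζ') ∈ D c := by rw [← hpair]; exact hh'c
            exact reachS_closure (fun e he => hdisp c e he) this hx'r
        obtain ⟨p₁, hp₁⟩ := hζ'r
        obtain ⟨p₂, hp₂⟩ := hζ'c
        refine hbroken ⟨p₁.append p₂.reverse, ?_⟩
        intro e he
        rw [SimpleGraph.Walk.edges_append, List.mem_append] at he
        rcases he with he | he
        · refine Or.inl ?_
          rw [hD'b]
          refine Finset.mem_erase.2 ⟨?_, hp₁ e he⟩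
          intro heh
          subst heh
          exact reachS_avoid hdet p₁ hp₁ he
        · rw [SimpleGraph.Walk.edges_reverse, List.mem_reverse] at he
          exact Or.inr (by rw [hD'c]; exact hp₂ e he)

end Descent

section DirA
open SimpleGraph Finset

variable {V : Type*} [Fintype V]

lemma dirA (G HR : SimpleGraph V) (hG : G.Connected)
    (R : Finset (Sym2 V)) (hdiag : ∀ e ∈ R, ¬ e.IsDiag)
    (hHR : HR = SimpleGraph.fromEdgeSet ↑R)
    (hacyc : HR.IsAcyclic)
    (htree : ∀ a ∈ HR.support, ∀ b ∈ HR.support, HR.Reachable a b)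
    (r : V) (hr : r ∈ HR.support)
    (u : V) (hu : u ∈ HR.support) (α : V) (f : V → V) :
    Cfun G HR R r u α ≤
      cmin G {e | e = s(u, α) ∨ ∃ w ∈ childrenOf HR r u, e = s(u, f w)}
        + ∑ w ∈ childrenOf HR r u, Cfun G HR R r w (f w) := by
  classical
  set K := childrenOf HR r u with hK
  set StarSet : Set (Sym2 V) :=
    {e | e = s(u, α) ∨ ∃ w ∈ childrenOf HR r u, e = s(u, f w)} with hSS
  -- star witness
  obtain ⟨D₀, hD₀disp, hD₀sat, hD₀cost⟩ :
      ∃ D : V → Finset (Sym2 V), IsDispersal G D ∧ Satisfies G D StarSet ∧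
        cost D = cmin G StarSet :=
    Nat.sInf_mem (cmin_set_nonempty G hG StarSet)
  -- child witnesses
  have hch : ∀ w : V, ∃ Dw : V → Finset (Sym2 V), IsDispersal G Dw ∧
      Satisfies G Dw (ERsub HR R r w) ∧
      (∃ p : G.Walk w (f w), ∀ e ∈ p.edges, e ∈ Dw w) ∧
      cost Dw = Cfun G HR R r w (f w) :=
    fun w => Nat.sInf_mem (cfun_set_nonempty G HR hG R r w (f w))
  choose g hgdisp hgsat hgwalk hgcost using hch
  set S₀ : Finset (Sym2 V) := Finset.univ.biUnion D₀ with hS₀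
  have hS₀card : S₀.card ≤ cost D₀ := Finset.card_biUnion_le
  have hS₀mem : ∀ (v : V) (e : Sym2 V), e ∈ D₀ v → e ∈ S₀ := by
    intro v e he
    exact Finset.mem_biUnion.2 ⟨v, Finset.mem_univ v, he⟩
  set Dbig : V → Finset (Sym2 V) :=
    fun v => (if v = u then S₀ else ∅) ∪ K.biUnion (fun w => g w v) with hDbig
  have hDbig_u : ∀ e ∈ S₀, e ∈ Dbig u := by
    intro e he
    exact Finset.mem_union_left _ (by simp [he])
  have hDbig_g : ∀ w ∈ K, ∀ (v : V) (e : Sym2 V), e ∈ g w v → e ∈ Dbig v := by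
    intro w hw v e he
    exact Finset.mem_union_right _ (Finset.mem_biUnion.2 ⟨w, hw, he⟩)
  -- dispersal
  have hdisp : IsDispersal G Dbig := by
    intro v e he
    rcases Finset.mem_union.1 he with h | h
    · by_cases hv : v = u
      · rw [if_pos hv] at h
        obtain ⟨z, _, hz⟩ := Finset.mem_biUnion.1 h
        exact hD₀disp z e hz
      · rw [if_neg hv] at h; simp at h
    · obtain ⟨w, hw, hwe⟩ := Finset.mem_biUnion.1 h
      exact hgdisp w v e hwe
  -- the pure walk
  have hsα : s(u, α) ∈ StarSet := Or.inl rfl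
  obtain ⟨pα, hpα⟩ := hD₀sat u α hsα
  have hwalk : ∃ p : G.Walk u α, ∀ e ∈ p.edges, e ∈ Dbig u := by
    refine ⟨pα, fun e he => hDbig_u e ?_⟩
    rcases hpα e he with h | h
    exacts [hS₀mem u e h, hS₀mem α e h]
  -- satisfaction of ERsub u
  have hsat : Satisfies G Dbig (ERsub HR R r u) := by
    intro x y hxy
    rcases ERsub_cases hdiag hHR hacyc htree hr hu hxy with ⟨w, hw, heq⟩ | ⟨w, hw, hew⟩
    · -- request from u to child w
      have hsw : s(u, f w) ∈ StarSet := Or.inr ⟨w, hw, rfl⟩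
      obtain ⟨q₁, hq₁⟩ := hD₀sat u (f w) hsw
      obtain ⟨q₂, hq₂⟩ := hgwalk w
      have hq₁' : ∀ e ∈ q₁.edges, e ∈ Dbig u := by
        intro e he
        refine hDbig_u e ?_
        rcases hq₁ e he with h | h
        exacts [hS₀mem u e h, hS₀mem (f w) e h]
      have hq₂' : ∀ e ∈ q₂.edges, e ∈ Dbig w := fun e he =>
        hDbig_g w hw w e (hq₂ e he)
      have hcomb : ∀ e ∈ (q₁.append q₂.reverse).edges, e ∈ Dbig u ∨ e ∈ Dbig w := by
        intro e he
        rw [SimpleGraph.Walk.edges_append, List.mem_append] at he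
        rcases he with h | h
        · exact Or.inl (hq₁' e h)
        · rw [SimpleGraph.Walk.edges_reverse, List.mem_reverse] at h
          exact Or.inr (hq₂' e h)
      rcases Sym2.eq_iff.1 heq with ⟨rfl, rfl⟩ | ⟨rfl, rfl⟩
      · exact ⟨q₁.append q₂.reverse, hcomb⟩
      · exact ⟨(q₁.append q₂.reverse).reverse, by
          intro e he
          rw [SimpleGraph.Walk.edges_reverse, List.mem_reverse] at he
          exact (hcomb e he).symm⟩
    · obtain ⟨q, hq⟩ := hgsat w x y hew
      refine ⟨q, fun e he => ?_⟩
      rcases hq e he with h | h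
      · exact Or.inl (hDbig_g w hw x e h)
      · exact Or.inr (hDbig_g w hw y e h)
  -- cost bound
  have hcost : cost Dbig ≤ S₀.card + ∑ w ∈ K, cost (g w) := by
    unfold cost
    calc ∑ v, (Dbig v).card
        ≤ ∑ v, ((if v = u then S₀ else ∅).card + (K.biUnion (fun w => g w v)).card) :=
          Finset.sum_le_sum (fun v _ => Finset.card_union_le _ _)
      _ = (∑ v, (if v = u then S₀ else ∅).card)
            + ∑ v, (K.biUnion (fun w => g w v)).card := Finset.sum_add_distrib
      _ ≤ S₀.card + ∑ v, ∑ w ∈ K, (g w v).card := by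
          gcongr with v hv
          · apply le_of_eq
            have hite : ∀ v : V, (if v = u then S₀ else ∅).card
                = if v = u then S₀.card else 0 := fun v => by split <;> simp
            rw [Finset.sum_congr rfl (fun v _ => hite v),
              Finset.sum_ite_eq' Finset.univ u (fun _ => S₀.card)]
            simp
          · exact Finset.card_biUnion_le
      _ = S₀.card + ∑ w ∈ K, ∑ v, (g w v).card := by rw [Finset.sum_comm]
      _ = S₀.card + ∑ w ∈ K, cost (g w) := rfl
  -- conclude
  have hmem : Cfun G HR R r u α ≤ cost Dbig :=
    Nat.sInf_le ⟨Dbig, hdisp, hsat, hwalk, rfl⟩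
  calc Cfun G HR R r u α ≤ cost Dbig := hmem
    _ ≤ S₀.card + ∑ w ∈ K, cost (g w) := hcost
    _ ≤ cost D₀ + ∑ w ∈ K, cost (g w) := by gcongr
    _ = cmin G StarSet + ∑ w ∈ K, Cfun G HR R r w (f w) := by
        rw [hD₀cost]
        congr 1
        exact Finset.sum_congr rfl (fun w _ => hgcost w)

end DirA

section DirB
open SimpleGraph Finset
open scoped Classical

variable {V : Type*} [Fintype V]

lemma meeting_points (G HR : SimpleGraph V) (R : Finset (Sym2 V))
    (hdiag : ∀ e ∈ R, ¬ e.IsDiag)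
    (hHR : HR = SimpleGraph.fromEdgeSet ↑R)
    (hacyc : HR.IsAcyclic)
    (htree : ∀ a ∈ HR.support, ∀ b ∈ HR.support, HR.Reachable a b)
    (r : V) (hr : r ∈ HR.support) (u : V) (hu : u ∈ HR.support) (α : V)
    (D : V → Finset (Sym2 V)) (hdisp : IsDispersal G D)
    (hsat : Satisfies G D (ERsub HR R r u))
    (hq : ∃ p : G.Walk u α, ∀ e ∈ p.edges, e ∈ D u)
    (hpsimin : ∀ D' : V → Finset (Sym2 V), IsDispersal G D' →
      Satisfies G D' (ERsub HR R r u) →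
      (∃ p : G.Walk u α, ∀ e ∈ p.edges, e ∈ D' u) → cost D' = cost D →
      psi G D ≤ psi G D') :
    ∀ w ∈ childrenOf HR r u, ∃ x, x ∈ ReachS G (D u) u ∧ x ∈ ReachS G (D w) w := by
  intro w hw
  by_contra hcon
  push_neg at hcon
  have hsubu : InSubtree HR r u u := subtree_self r u
  have hsubw : InSubtree HR r u w := subtree_step htree hr hu hu hsubu hw
  have hreq : s(u, w) ∈ ERsub HR R r u := request_mem_ERsub hHR htree hr hu hu hsubu hw
  obtain ⟨ω, hω⟩ := hsat u w hreq
  have hwnr : w ∉ ReachS G (D u) u := fun hwr => hcon w hwr (reachS_self G (D w) w)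
  obtain ⟨h', hh'w, hh'u, ζ, hζ, hζr⟩ :=
    boundary_edge (T := D w) (fun e he => hdisp u e he) ω hω
      (reachS_self G (D u) u) hwnr
  by_cases hdet : ∀ x ∈ h', x ∉ ReachS G (D w) w
  · exact descent G HR R hdiag hHR hacyc htree r hr u hu α D hdisp hsat hq hpsimin
      (Fintype.card V) u w (by omega) hw hsubu hsubw h' hh'w hh'u hdet ⟨ζ, hζ, hζr⟩
  · push_neg at hdet
    obtain ⟨x', hx'h, hx'r⟩ := hdet
    have hζw : ζ ∈ ReachS G (D w) w := by
      by_cases hxx : x' = ζ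
      · rwa [hxx] at hx'r
      · have hpair : h' = s(x', ζ) :=
          ((Sym2.mem_and_mem_iff hxx).1 ⟨hx'h, hζ⟩).symm ▸ rfl
        have : s(x', ζ) ∈ D w := by rw [← hpair]; exact hh'w
        exact reachS_closure (fun e he => hdisp w e he) this hx'r
    exact hcon ζ hζr hζw

lemma dirB (G HR : SimpleGraph V) (hG : G.Connected) (R : Finset (Sym2 V))
    (hdiag : ∀ e ∈ R, ¬ e.IsDiag)
    (hHR : HR = SimpleGraph.fromEdgeSet ↑R)
    (hacyc : HR.IsAcyclic)
    (htree : ∀ a ∈ HR.support, ∀ b ∈ HR.support, HR.Reachable a b)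
    (r : V) (hr : r ∈ HR.support)
    (u : V) (hu : u ∈ HR.support) (α : V) :
    sInf {c | ∃ f : V → V,
        c = cmin G {e | e = s(u, α) ∨ ∃ w ∈ childrenOf HR r u, e = s(u, f w)}
          + ∑ w ∈ childrenOf HR r u, Cfun G HR R r w (f w)} ≤ Cfun G HR R r u α := by
  classical
  obtain ⟨D₁, hd1, hs1, hw1, hc1⟩ :
      ∃ D : V → Finset (Sym2 V), IsDispersal G D ∧
        Satisfies G D (ERsub HR R r u) ∧
        (∃ p : G.Walk u α, ∀ e ∈ p.edges, e ∈ D u) ∧ cost D = Cfun G HR R r u α :=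
    Nat.sInf_mem (cfun_set_nonempty G HR hG R r u α)
  set T : Set ℕ := {k | ∃ D : V → Finset (Sym2 V), IsDispersal G D ∧
      Satisfies G D (ERsub HR R r u) ∧
      (∃ p : G.Walk u α, ∀ e ∈ p.edges, e ∈ D u) ∧
      cost D = Cfun G HR R r u α ∧ psi G D = k} with hT
  have hTne : T.Nonempty := ⟨psi G D₁, D₁, hd1, hs1, hw1, hc1, rfl⟩
  obtain ⟨D, hdisp, hsat, hq, hcost, hpsi⟩ := Nat.sInf_mem hTne
  have hpsimin : ∀ D' : V → Finset (Sym2 V), IsDispersal G D' →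
      Satisfies G D' (ERsub HR R r u) →
      (∃ p : G.Walk u α, ∀ e ∈ p.edges, e ∈ D' u) → cost D' = cost D →
      psi G D ≤ psi G D' := by
    intro D' h1 h2 h3 h4
    rw [hpsi]
    exact Nat.sInf_le ⟨D', h1, h2, h3, by rw [h4, hcost], rfl⟩
  have hP := meeting_points G HR R hdiag hHR hacyc htree r hr u hu α D
    hdisp hsat hq hpsimin
  have hfex : ∀ w : V, ∃ x : V, w ∈ childrenOf HR r u →
      x ∈ ReachS G (D u) u ∧ x ∈ ReachS G (D w) w := by
    intro w
    by_cases hw : w ∈ childrenOf HR r u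
    · obtain ⟨x, hx⟩ := hP w hw
      exact ⟨x, fun _ => hx⟩
    · exact ⟨u, fun hcon => absurd hcon hw⟩
  choose f hf using hfex
  -- the star witness
  have hstar : cmin G {e | e = s(u, α) ∨ ∃ w ∈ childrenOf HR r u, e = s(u, f w)}
      ≤ (D u).card := by
    apply Nat.sInf_le
    refine ⟨fun v => if v = u then D u else ∅, ?_, ?_, ?_⟩
    · intro v e he
      dsimp only at he
      by_cases hv : v = u
      · rw [if_pos hv] at he; exact hdisp u e he
      · rw [if_neg hv] at he; simp at he
    · intro x y hxy
      have hDu : ∀ z : V, ∀ e ∈ (if z = u then D u else ∅), e ∈ D u := by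
        intro z e he
        by_cases hz : z = u
        · rwa [if_pos hz] at he
        · rw [if_neg hz] at he; simp at he
      have huz : ∀ e ∈ D u, e ∈ (if u = u then D u else ∅) := by
        intro e he; rwa [if_pos rfl]
      rcases hxy with heq | ⟨w, hw, heq⟩
      · obtain ⟨p, hp⟩ := hq
        rcases Sym2.eq_iff.1 heq with ⟨rfl, rfl⟩ | ⟨rfl, rfl⟩
        · exact ⟨p, fun e he => Or.inl (huz e (hp e he))⟩
        · exact ⟨p.reverse, fun e he => Or.inr (huz e (hp e (by
            rwa [SimpleGraph.Walk.edges_reverse, List.mem_reverse] at he)))⟩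
      · obtain ⟨p, hp⟩ := (hf w hw).1
        rcases Sym2.eq_iff.1 heq with ⟨rfl, rfl⟩ | ⟨rfl, rfl⟩
        · exact ⟨p, fun e he => Or.inl (huz e (hp e he))⟩
        · exact ⟨p.reverse, fun e he => Or.inr (huz e (hp e (by
            rwa [SimpleGraph.Walk.edges_reverse, List.mem_reverse] at he)))⟩
    · unfold cost
      dsimp only
      have hite : ∀ v : V, ((if v = u then D u else ∅) : Finset (Sym2 V)).card
          = if v = u then (D u).card else 0 := fun v => by split <;> simp
      rw [Finset.sum_congr rfl (fun v _ => hite v),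
        Finset.sum_ite_eq' Finset.univ u (fun _ => (D u).card)]
      simp
  -- child witnesses
  have hchild : ∀ w ∈ childrenOf HR r u, Cfun G HR R r w (f w)
      ≤ ∑ v ∈ Finset.univ.filter (fun v => InSubtree HR r w v), (D v).card := by
    intro w hw
    have hws : w ∈ HR.support := by
      obtain ⟨hadj, _⟩ := mem_childrenOf.1 hw
      exact (SimpleGraph.mem_support HR).2 ⟨u, hadj.symm⟩
    have hsubw : InSubtree HR r u w :=
      subtree_step htree hr hu hu (subtree_self r u) hw
    apply Nat.sInf_le
    refine ⟨fun v => if InSubtree HR r w v then D v else ∅, ?_, ?_, ?_, ?_⟩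
    · intro v e he
      dsimp only at he
      by_cases hv : InSubtree HR r w v
      · rw [if_pos hv] at he; exact hdisp v e he
      · rw [if_neg hv] at he; simp at he
    · intro x y hxy
      obtain ⟨hR, hsub⟩ := hxy
      have hxw : InSubtree HR r w x := hsub x (by simp)
      have hyw : InSubtree HR r w y := hsub y (by simp)
      have hxyne : x ≠ y := by
        intro hxy2; exact hdiag _ hR (by simp [hxy2])
      have hadj : HR.Adj x y := by
        rw [hHR]
        exact (SimpleGraph.fromEdgeSet_adj _).2 ⟨by simpa using hR, hxyne⟩
      have hxs : x ∈ HR.support := (SimpleGraph.mem_support HR).2 ⟨y, hadj⟩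
      have hys : y ∈ HR.support := (SimpleGraph.mem_support HR).2 ⟨x, hadj.symm⟩
      have hxu : InSubtree HR r u x := subtree_trans htree hr hu hws hxs hsubw hxw
      have hyu : InSubtree HR r u y := subtree_trans htree hr hu hws hys hsubw hyw
      obtain ⟨p, hp⟩ := hsat x y ⟨hR, by
        intro z hz
        rw [Sym2.mem_iff] at hz
        rcases hz with rfl | rfl
        exacts [hxu, hyu]⟩
      refine ⟨p, fun e he => ?_⟩
      rcases hp e he with h1 | h1
      · exact Or.inl (by dsimp only; rwa [if_pos hxw])
      · exact Or.inr (by dsimp only; rwa [if_pos hyw])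
    · obtain ⟨p, hp⟩ := (hf w hw).2
      refine ⟨p, fun e he => ?_⟩
      dsimp only
      rw [if_pos (subtree_self r w)]
      exact hp e he
    · unfold cost
      dsimp only
      have hite : ∀ v : V, ((if InSubtree HR r w v then D v else ∅) : Finset (Sym2 V)).card
          = if InSubtree HR r w v then (D v).card else 0 := fun v => by split <;> simp
      rw [Finset.sum_congr rfl (fun v _ => hite v), Finset.sum_ite, Finset.sum_const_zero,
        add_zero]
  -- the total accounting
  have hsum : (D u).card + ∑ w ∈ childrenOf HR r u,
      ∑ v ∈ Finset.univ.filter (fun v => InSubtree HR r w v), (D v).card ≤ cost D := by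
    set K := childrenOf HR r u with hK
    set F : V → Finset V := fun w => Finset.univ.filter (fun v => InSubtree HR r w v) with hF
    have hdisj : (K : Set V).PairwiseDisjoint F := by
      intro w hwK w' hw'K hne
      simp only [Function.onFun]
      rw [Finset.disjoint_left]
      intro v hv hv'
      rw [hF] at hv hv'
      simp only [Finset.mem_filter, Finset.mem_univ, true_and] at hv hv'
      exact hne (subtree_disjoint hacyc htree hr hwK hw'K hv hv')
    have h1 : ∑ w ∈ K, ∑ v ∈ F w, (D v).card = ∑ v ∈ K.biUnion F, (D v).card :=
      (Finset.sum_biUnion hdisj).symm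
    have h2 : K.biUnion F ⊆ Finset.univ.erase u := by
      intro v hv
      obtain ⟨w, hwK, hvF⟩ := Finset.mem_biUnion.1 hv
      rw [hF] at hvF
      simp only [Finset.mem_filter, Finset.mem_univ, true_and] at hvF
      refine Finset.mem_erase.2 ⟨?_, Finset.mem_univ v⟩
      intro hvu
      subst hvu
      exact not_in_subtree_of_child hwK hvF
    calc (D u).card + ∑ w ∈ K, ∑ v ∈ F w, (D v).card
        = (D u).card + ∑ v ∈ K.biUnion F, (D v).card := by rw [h1]
      _ ≤ (D u).card + ∑ v ∈ Finset.univ.erase u, (D v).card :=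
          Nat.add_le_add_left (Finset.sum_le_sum_of_subset h2) _
      _ = ∑ v, (D v).card :=
          Finset.add_sum_erase _ (fun v => (D v).card) (Finset.mem_univ u)
      _ = cost D := rfl
  -- assemble
  calc sInf {c | ∃ f : V → V,
        c = cmin G {e | e = s(u, α) ∨ ∃ w ∈ childrenOf HR r u, e = s(u, f w)}
          + ∑ w ∈ childrenOf HR r u, Cfun G HR R r w (f w)}
      ≤ cmin G {e | e = s(u, α) ∨ ∃ w ∈ childrenOf HR r u, e = s(u, f w)}
          + ∑ w ∈ childrenOf HR r u, Cfun G HR R r w (f w) := Nat.sInf_le ⟨f, rfl⟩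
    _ ≤ (D u).card + ∑ w ∈ childrenOf HR r u,
          ∑ v ∈ Finset.univ.filter (fun v => InSubtree HR r w v), (D v).card :=
        add_le_add hstar (Finset.sum_le_sum hchild)
    _ ≤ cost D := hsum
    _ = Cfun G HR R r u α := hcost

end DirB

theorem stmt10 {V : Type*} [Fintype V] (G : SimpleGraph V) (hG : G.Connected)
    (R : Finset (Sym2 V)) (hdiag : ∀ e ∈ R, ¬ e.IsDiag)
    (HR : SimpleGraph V) (hHR : HR = SimpleGraph.fromEdgeSet ↑R)
    (hacyc : HR.IsAcyclic)
    (htree : ∀ a ∈ HR.support, ∀ b ∈ HR.support, HR.Reachable a b)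
    (r : V) (hr : r ∈ HR.support)
    (u : V) (hu : u ∈ HR.support) (α : V) :
    Cfun G HR R r u α =
      sInf {c | ∃ f : V → V,
        c = cmin G {e | e = s(u, α) ∨ ∃ w ∈ childrenOf HR r u, e = s(u, f w)}
          + ∑ w ∈ childrenOf HR r u, Cfun G HR R r w (f w)} := by
  apply le_antisymm
  · refine le_csInf ⟨_, fun _ => u, rfl⟩ ?_
    rintro b ⟨f, rfl⟩
    exact dirA G HR hG R hdiag hHR hacyc htree r hr u hu α f
  · exact dirB G HR hG R hdiag hHR hacyc htree r hr u hu α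
end

section
/- Let T be a finite tree on vertex set V and let R be a request set on T. For each edge e = {u,v} of T, removing e splits T into two components with vertex sets V_u (containing u) and V_v (containing v); let B_{uv} be the bipartite graph on V_u ∪ V_v whose edge set is { {a,b} ∈ R : a ∈ V_u, b ∈ V_v }. Then a dispersal D of T satisfies R if and only if for every edge e = {u,v} of T, the set C_{uv} = { w ∈ V : e ∈ D_w } is a vertex cover of B_{uv}. -/
open SimpleGraph Finset

/-- `C` is a vertex cover of the graph `B`: every edge of `B` is incident to a vertex
of `C`. -/
def IsVertexCover {V : Type*} (B : SimpleGraph V) (C : Set V) : Prop :=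
  ∀ a b : V, B.Adj a b → a ∈ C ∨ b ∈ C

/-- The bipartite graph `B_{uv}` associated with the tree edge `{u,v}`: its edges are the
requests of `R` having one endpoint in the component `V_u` of `u` and the other in the
component `V_v` of `v` of the tree with the edge `{u,v}` deleted. -/
def Buv {V : Type*} (G : SimpleGraph V) (R : Set (Sym2 V)) (u v : V) : SimpleGraph V :=
  SimpleGraph.fromEdgeSet {f | f ∈ R ∧ ∃ a b : V, f = s(a, b) ∧
    (G.deleteEdges {s(u, v)}).Reachable u a ∧ (G.deleteEdges {s(u, v)}).Reachable v b}

lemma crossing_aux {V : Type*} {G : SimpleGraph V} {u v : V} :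
    ∀ {x y : V} (p : G.Walk x y), p.IsPath → s(u, v) ∈ p.edges →
      ((G.deleteEdges {s(u, v)}).Reachable x u ∧ (G.deleteEdges {s(u, v)}).Reachable v y) ∨
      ((G.deleteEdges {s(u, v)}).Reachable x v ∧ (G.deleteEdges {s(u, v)}).Reachable u y) := by
  intro x y p
  induction p with
  | nil => simp
  | @cons x w y h p ih =>
    intro hp he
    rw [Walk.edges_cons, List.mem_cons] at he
    rcases he with he | he
    · have hnotin : s(u, v) ∉ p.edges := by
        intro hmem
        have := hp.edges_nodup
        rw [Walk.edges_cons] at this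
        exact (List.nodup_cons.mp this).1 (he ▸ hmem)
      have hr : (G.deleteEdges {s(u, v)}).Reachable w y := ⟨p.toDeleteEdge _ hnotin⟩
      rw [Sym2.eq_iff] at he
      rcases he with ⟨rfl, rfl⟩ | ⟨rfl, rfl⟩
      · exact Or.inl ⟨Reachable.refl _, hr⟩
      · exact Or.inr ⟨Reachable.refl _, hr⟩
    · have hp' := hp.of_cons
      have hne : s(x, w) ≠ s(u, v) := by
        intro hEq
        have := hp.edges_nodup
        rw [Walk.edges_cons] at this
        exact (List.nodup_cons.mp this).1 (hEq ▸ he)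
      have hadj : (G.deleteEdges {s(u, v)}).Adj x w := by
        rw [deleteEdges_adj]; exact ⟨h, by simpa using hne⟩
      rcases ih hp' he with ⟨h1, h2⟩ | ⟨h1, h2⟩
      · exact Or.inl ⟨hadj.reachable.trans h1, h2⟩
      · exact Or.inr ⟨hadj.reachable.trans h1, h2⟩

lemma bridge_aux {V : Type*} {G : SimpleGraph V} (hT : G.IsTree) {u v : V} (h : G.Adj u v) :
    ¬ (G.deleteEdges {s(u, v)}).Reachable u v := by
  have := (isAcyclic_iff_forall_adj_isBridge.mp hT.IsAcyclic) h
  rw [isBridge_iff] at this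
  exact this


theorem stmt11 {V : Type*} [Fintype V] (G : SimpleGraph V) (hT : G.IsTree)
    (R : Set (Sym2 V)) (D : V → Finset (Sym2 V)) (hD : IsDispersal G D) :
    Satisfies G D R ↔
      ∀ u v : V, G.Adj u v →
        _root_.IsVertexCover (Buv G R u v) {w : V | s(u, v) ∈ D w} := by
  constructor
  · intro hS u v huv a b hab
    classical
    rw [Buv, fromEdgeSet_adj] at hab
    obtain ⟨⟨hR, a', b', heq, hua', hvb'⟩, hne⟩ := hab
    obtain ⟨p, hp⟩ := hS a b hR
    by_cases hmem : s(u, v) ∈ p.edges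
    · exact hp _ hmem
    · exfalso
      have hab' : (G.deleteEdges {s(u, v)}).Reachable a b := ⟨p.toDeleteEdge _ hmem⟩
      rw [Sym2.eq_iff] at heq
      rcases heq with ⟨rfl, rfl⟩ | ⟨rfl, rfl⟩
      · exact bridge_aux hT huv (hua'.trans (hab'.trans hvb'.symm))
      · exact bridge_aux hT huv (hua'.trans (hab'.symm.trans hvb'.symm))
  · intro hC x y hxy
    classical
    obtain ⟨w⟩ := hT.isConnected.preconnected x y
    let p := w.toPath
    refine ⟨p.1, fun e he => ?_⟩
    induction e using Sym2.ind with
    | _ u v =>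
      have huv : G.Adj u v := p.1.adj_of_mem_edges he
      rcases crossing_aux p.1 p.2 he with ⟨h1, h2⟩ | ⟨h1, h2⟩
      · have hxyne : x ≠ y := by
          rintro rfl
          exact bridge_aux hT huv (h1.symm.trans h2.symm)
        have hAdj : (Buv G R u v).Adj x y := by
          rw [Buv, fromEdgeSet_adj]
          exact ⟨⟨hxy, x, y, rfl, h1.symm, h2⟩, hxyne⟩
        exact hC u v huv x y hAdj
      · have hxyne : x ≠ y := by
          rintro rfl
          exact bridge_aux hT huv (h2.trans h1)
        have hAdj : (Buv G R u v).Adj x y := by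
          rw [Buv, fromEdgeSet_adj]
          exact ⟨⟨hxy, y, x, Sym2.eq_swap, h2, h1.symm⟩, hxyne⟩
        exact hC u v huv x y hAdj
end

section
/- Let T be a finite tree on vertex set V and let R be a request set on T. For each edge e = {u,v} of T let B_{uv} be the bipartite graph on the two components of T − e whose edges are the requests in R having one endpoint in each component, and suppose for each edge e = {u,v} a vertex cover C_{uv} of B_{uv} is chosen. Then the dispersal D defined by D_w = { e = {u,v} ∈ E : w ∈ C_{uv} } satisfies R, and its cost equals Σ_{e={u,v} ∈ E} |C_{uv}|. -/
open SimpleGraph Finset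

lemma reach_aux {V : Type*} {G : SimpleGraph V} {u v a b : V} (p : G.Walk u v)
    (hp : p.IsPath) (he : s(a, b) ∈ p.edges) :
    ((G.deleteEdges {s(a,b)}).Reachable u a ∧ (G.deleteEdges {s(a,b)}).Reachable b v) ∨
    ((G.deleteEdges {s(a,b)}).Reachable u b ∧ (G.deleteEdges {s(a,b)}).Reachable a v) := by
  induction p with
  | nil => simp at he
  | @cons u w v h q ih =>
    rw [SimpleGraph.Walk.cons_isPath_iff] at hp
    rw [SimpleGraph.Walk.edges_cons, List.mem_cons] at he
    have hq : s(u, w) ∉ q.edges := fun hc =>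
      hp.2 (SimpleGraph.Walk.fst_mem_support_of_mem_edges q hc)
    rcases he with he | he
    · have hqab : s(a, b) ∉ q.edges := by rwa [← he] at hq
      have qd := q.toDeleteEdges {s(a,b)} (by
        intro e hee
        simp only [Set.mem_singleton_iff]
        intro hcon; exact hqab (hcon ▸ hee))
      rcases Sym2.eq_iff.mp he with ⟨rfl, rfl⟩ | ⟨rfl, rfl⟩
      · exact Or.inl ⟨Reachable.refl _, ⟨qd⟩⟩
      · exact Or.inr ⟨Reachable.refl _, ⟨qd⟩⟩
    · have hne : s(u, w) ∉ ({s(a,b)} : Set (Sym2 V)) := by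
        simp only [Set.mem_singleton_iff]
        intro hcon; exact hq (hcon ▸ he)
      have huw : (G.deleteEdges {s(a,b)}).Reachable u w :=
        (SimpleGraph.Adj.reachable (by rw [SimpleGraph.deleteEdges_adj]; exact ⟨h, hne⟩))
      rcases ih hp.1 he with ⟨h1, h2⟩ | ⟨h1, h2⟩
      · exact Or.inl ⟨huw.trans h1, h2⟩
      · exact Or.inr ⟨huw.trans h1, h2⟩

open scoped Classical in
theorem stmt12 {V : Type*} [Fintype V] (G : SimpleGraph V) (hT : G.IsTree)
    (R : Set (Sym2 V)) (C : Sym2 V → Finset V)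
    (hC : ∀ u v : V, G.Adj u v → _root_.IsVertexCover (Buv G R u v) ↑(C s(u, v))) :
    Satisfies G (fun w => G.edgeFinset.filter (fun e => w ∈ C e)) R ∧
      cost (fun w => G.edgeFinset.filter (fun e => w ∈ C e)) =
        ∑ e ∈ G.edgeFinset, (C e).card := by
  constructor
  · intro u v hR
    by_cases huv : u = v
    · subst huv; exact ⟨SimpleGraph.Walk.nil, by simp⟩
    obtain ⟨q⟩ := hT.isConnected.preconnected u v
    obtain ⟨p, hp⟩ := q.toPath
    refine ⟨p, fun e hep => ?_⟩
    have heG : e ∈ G.edgeSet := p.edges_subset_edgeSet hep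
    induction e with
    | h a b =>
      have hab : G.Adj a b := heG
      have hmem : s(a,b) ∈ G.edgeFinset := by rwa [SimpleGraph.mem_edgeFinset]
      have key := reach_aux p hp hep
      rcases key with ⟨h1, h2⟩ | ⟨h1, h2⟩
      · have hadj : (Buv G R a b).Adj u v := by
          rw [Buv, SimpleGraph.fromEdgeSet_adj]
          exact ⟨⟨hR, u, v, rfl, h1.symm, h2⟩, huv⟩
        rcases hC a b hab u v hadj with hc | hc
        · exact Or.inl (Finset.mem_filter.mpr ⟨hmem, hc⟩)
        · exact Or.inr (Finset.mem_filter.mpr ⟨hmem, hc⟩)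
      · have hadj : (Buv G R a b).Adj v u := by
          rw [Buv, SimpleGraph.fromEdgeSet_adj]
          refine ⟨⟨?_, v, u, rfl, h2, h1.symm⟩, fun hc => huv hc.symm⟩
          rwa [Sym2.eq_swap]
        rcases hC a b hab v u hadj with hc | hc
        · exact Or.inr (Finset.mem_filter.mpr ⟨hmem, hc⟩)
        · exact Or.inl (Finset.mem_filter.mpr ⟨hmem, hc⟩)
  · simp only [cost, Finset.card_filter]
    rw [Finset.sum_comm]
    refine Finset.sum_congr rfl fun e _ => ?_
    rw [← Finset.card_filter]
    congr 1
    ext w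
    simp
end

section
/- Let T be a finite tree on vertex set V and let R be a request set on T. For each edge e = {u,v} of T let B_{uv} be the bipartite graph on the two components of T − e whose edges are the requests in R having one endpoint in each component, and let τ(B_{uv}) denote the minimum cardinality of a vertex cover of B_{uv}. Then the minimum cost of a dispersal of T satisfying R equals Σ_{e={u,v} ∈ E} τ(B_{uv}). -/
open SimpleGraph Finset

/-- The bipartite graph `B_{uv}` associated with the tree edge `e = {u,v}`: its edges are
the requests of `R` whose endpoints lie in the two different components of the tree with
the edge `e` deleted. -/
def Buv' {V : Type*} (G : SimpleGraph V) (R : Set (Sym2 V)) (e : Sym2 V) : SimpleGraph V :=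
  SimpleGraph.fromEdgeSet {f | f ∈ R ∧ ∃ a b : V, f = s(a, b) ∧
    ¬ (G.deleteEdges {e}).Reachable a b}

/-- `τ B`: the minimum cardinality of a vertex cover of `B`. -/
noncomputable def tau {V : Type*} (B : SimpleGraph V) : ℕ :=
  sInf {k | ∃ C : Finset V, _root_.IsVertexCover B ↑C ∧ C.card = k}

section Aux
variable {V : Type*}

lemma mem_edges_of_not_reach {G : SimpleGraph V} {a b : V} {e : Sym2 V}
    (p : G.Walk a b) (h : ¬ (G.deleteEdges {e}).Reachable a b) : e ∈ p.edges := by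
  by_contra he
  exact h ⟨p.toDeleteEdges {e} (fun f hf hfe => he (Set.mem_singleton_iff.mp hfe ▸ hf))⟩

lemma not_reach_of_mem_path_edges {G : SimpleGraph V} (hA : G.IsAcyclic)
    {a b : V} (p : G.Path a b) {f : Sym2 V} (hf : f ∈ (p : G.Walk a b).edges) :
    ¬ (G.deleteEdges {f}).Reachable a b := by
  classical
  rintro ⟨q⟩
  have hsub : ∀ e ∈ q.edges, e ∈ G.edgeSet := fun e he => by
    have := q.edges_subset_edgeSet he
    rw [edgeSet_deleteEdges] at this
    exact this.1
  have hfq : f ∉ q.edges := fun h => by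
    have := q.edges_subset_edgeSet h
    rw [edgeSet_deleteEdges] at this
    exact this.2 rfl
  have heq : p = (q.transfer G hsub).toPath := hA.path_unique p _
  have hf' : f ∈ (q.transfer G hsub).edges :=
    (q.transfer G hsub).edges_toPath_subset (heq ▸ hf)
  rw [Walk.edges_transfer] at hf'
  exact hfq hf'

lemma exists_min_cover [Fintype V] (B : SimpleGraph V) :
    ∃ C : Finset V, _root_.IsVertexCover B ↑C ∧ C.card = tau B := by
  have hne : {k | ∃ C : Finset V, _root_.IsVertexCover B ↑C ∧ C.card = k}.Nonempty :=
    ⟨(univ : Finset V).card, univ, fun a b _ => Or.inl (mem_coe.mpr (mem_univ a)), rfl⟩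
  exact Nat.sInf_mem hne

lemma tau_le_cover [Fintype V] {B : SimpleGraph V} {C : Finset V}
    (h : _root_.IsVertexCover B ↑C) : tau B ≤ C.card :=
  Nat.sInf_le ⟨C, h, rfl⟩

end Aux

open scoped Classical in
theorem stmt13 {V : Type*} [Fintype V] (G : SimpleGraph V) (hT : G.IsTree)
    (R : Set (Sym2 V)) :
    cmin G R = ∑ e ∈ G.edgeFinset, tau (Buv' G R e) := by
  classical
  -- construct the optimal dispersal from minimum vertex covers
  set Cov : Sym2 V → Finset V := fun e => (exists_min_cover (Buv' G R e)).choose with hCov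
  have hCovSpec : ∀ e, _root_.IsVertexCover (Buv' G R e) ↑(Cov e) ∧ (Cov e).card = tau (Buv' G R e) :=
    fun e => (exists_min_cover (Buv' G R e)).choose_spec
  set D : V → Finset (Sym2 V) := fun w => G.edgeFinset.filter (fun e => w ∈ Cov e) with hD
  have hDisp : IsDispersal G D := by
    intro v e he
    exact mem_edgeFinset.mp (mem_filter.mp he).1
  have hSat : Satisfies G D R := by
    intro a b hab
    by_cases hEq : a = b
    · subst hEq; exact ⟨Walk.nil, by simp⟩
    · obtain ⟨w⟩ := hT.isConnected.preconnected a b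
      refine ⟨w.toPath, fun f hf => ?_⟩
      have hfG : f ∈ G.edgeSet := Walk.edges_subset_edgeSet _ hf
      have hnr : ¬ (G.deleteEdges {f}).Reachable a b :=
        not_reach_of_mem_path_edges hT.IsAcyclic w.toPath hf
      have hadj : (Buv' G R f).Adj a b := by
        rw [Buv', fromEdgeSet_adj]
        exact ⟨⟨hab, a, b, rfl, hnr⟩, hEq⟩
      rcases (hCovSpec f).1 a b hadj with h | h
      · exact Or.inl (mem_filter.mpr ⟨mem_edgeFinset.mpr hfG, h⟩)
      · exact Or.inr (mem_filter.mpr ⟨mem_edgeFinset.mpr hfG, h⟩)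
  have hCost : cost D = ∑ e ∈ G.edgeFinset, tau (Buv' G R e) := by
    unfold cost
    have : ∀ w, (D w).card = ∑ e ∈ G.edgeFinset, if w ∈ Cov e then 1 else 0 := by
      intro w; rw [hD]; rw [Finset.card_filter]
    simp_rw [this]
    rw [Finset.sum_comm]
    refine Finset.sum_congr rfl fun e _ => ?_
    rw [← (hCovSpec e).2, ← Finset.card_filter, Finset.filter_mem_eq_inter,
      Finset.univ_inter]
  have hmem : (∑ e ∈ G.edgeFinset, tau (Buv' G R e)) ∈
      {c | ∃ D : V → Finset (Sym2 V), IsDispersal G D ∧ Satisfies G D R ∧ cost D = c} :=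
    ⟨D, hDisp, hSat, hCost⟩
  refine le_antisymm (Nat.sInf_le hmem) (le_csInf ⟨_, hmem⟩ ?_)
  rintro c ⟨D', hDisp', hSat', rfl⟩
  -- lower bound
  have hcover : ∀ e, _root_.IsVertexCover (Buv' G R e) ↑(univ.filter (fun w => e ∈ D' w)) := by
    intro e a b hadj
    rw [Buv', fromEdgeSet_adj] at hadj
    obtain ⟨⟨hR, a', b', heq, hnr'⟩, hne⟩ := hadj
    have hnr : ¬ (G.deleteEdges {e}).Reachable a b := by
      rcases Sym2.eq_iff.mp heq with ⟨rfl, rfl⟩ | ⟨rfl, rfl⟩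
      · exact hnr'
      · exact fun h => hnr' h.symm
    obtain ⟨p, hp⟩ := hSat' a b hR
    rcases hp e (mem_edges_of_not_reach p hnr) with h | h
    · exact Or.inl (mem_coe.mpr (mem_filter.mpr ⟨mem_univ a, h⟩))
    · exact Or.inr (mem_coe.mpr (mem_filter.mpr ⟨mem_univ b, h⟩))
  calc ∑ e ∈ G.edgeFinset, tau (Buv' G R e)
      ≤ ∑ e ∈ G.edgeFinset, (univ.filter (fun w => e ∈ D' w)).card :=
        Finset.sum_le_sum fun e _ => tau_le_cover (hcover e)
    _ = ∑ e ∈ G.edgeFinset, ∑ w : V, if e ∈ D' w then 1 else 0 := by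
        refine Finset.sum_congr rfl fun e _ => ?_; rw [Finset.card_filter]
    _ = ∑ w : V, ∑ e ∈ G.edgeFinset, if e ∈ D' w then 1 else 0 := Finset.sum_comm
    _ = ∑ w : V, (D' w).card := by
        refine Finset.sum_congr rfl fun w _ => ?_
        rw [← Finset.card_filter]
        congr 1
        rw [Finset.filter_mem_eq_inter, Finset.inter_eq_right.mpr
          (fun e he => mem_edgeFinset.mpr (hDisp' w e he))]
    _ = cost D' := rfl
end
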